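/- arXiv:1910.01938 — 9 statements merged into one kernel-verified Lean document; each statement's English description precedes it below -/
import Mathlib

section
/- Let X be a one-sided shift space and for (k,l) ∈ ℕ×ℕ with k ≤ l define x ∼_{k,l} x' iff x_{[0,k)} = x'_{[0,k)} and ⋃_{l'≤l} P_{l'}(σ^k(x)) = ⋃_{l'≤l} P_{l'}(σ^k(x')). If k₁ ≤ k₂ and l₁ − k₁ ≤ l₂ − k₂ (with k₁ ≤ l₁ and k₂ ≤ l₂), then x ∼_{k₂,l₂} x' implies x ∼_{k₁,l₁} x'. -/
open Function Set

/-- The shift map on one-sided sequences. -/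
def shiftMap {A : Type*} : (ℕ → A) → (ℕ → A) := fun x n => x (n + 1)

/-- Prepend a finite word to a one-sided sequence. -/
def wordAppend {A : Type*} (μ : List A) (x : ℕ → A) : ℕ → A :=
  fun n => if h : n < μ.length then μ.get ⟨n, h⟩ else x (n - μ.length)

/-- A one-sided shift space: a closed, shift-invariant subset of `A^ℕ`. -/
def IsShiftSpace {A : Type*} [TopologicalSpace A] (X : Set (ℕ → A)) : Prop :=
  IsClosed X ∧ ∀ x ∈ X, shiftMap x ∈ X

/-- `⋃_{l' ≤ l} P_{l'}(x)`: the set of words of length at most `l` that may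
precede `x` in `X`. -/
def predUpTo {A : Type*} (X : Set (ℕ → A)) (l : ℕ) (x : ℕ → A) : Set (List A) :=
  {μ : List A | μ.length ≤ l ∧ wordAppend μ x ∈ X}

/-- The `(k,l)`-equivalence relation: `x ∼_{k,l} x'` iff `x_{[0,k)} = x'_{[0,k)}`
and `⋃_{l'≤l} P_{l'}(σ^k(x)) = ⋃_{l'≤l} P_{l'}(σ^k(x'))`. -/
def klEquiv {A : Type*} (X : Set (ℕ → A)) (k l : ℕ) (x x' : ℕ → A) : Prop :=
  (∀ i < k, x i = x' i) ∧
    predUpTo X l (shiftMap^[k] x) = predUpTo X l (shiftMap^[k] x')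

lemma shiftMap_iter {A : Type*} (x : ℕ → A) (k n : ℕ) :
    shiftMap^[k] x n = x (n + k) := by
  induction k generalizing x n with
  | zero => rfl
  | succ k ih =>
    rw [Function.iterate_succ_apply, ih]
    simp [shiftMap, Nat.add_assoc, Nat.add_comm 1 k]

lemma word_shift {A : Type*} (μ : List A) (y : ℕ → A) (a b : ℕ) (hab : a ≤ b) :
    wordAppend (μ ++ List.ofFn (fun i : Fin (b - a) => y (a + i))) (shiftMap^[b] y)
      = wordAppend μ (shiftMap^[a] y) := by
  funext n
  simp only [wordAppend, List.length_append, List.length_ofFn]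
  by_cases h1 : n < μ.length
  · rw [dif_pos (by omega), dif_pos h1]
    simp [List.getElem_append_left h1]
  · rw [dif_neg h1]
    by_cases h2 : n < μ.length + (b - a)
    · rw [dif_pos h2]
      simp only [List.get_eq_getElem, Fin.val_mk]
      rw [List.getElem_append_right (by omega)]
      simp only [List.getElem_ofFn]
      rw [shiftMap_iter]
      congr 1
      omega
    · rw [dif_neg h2, shiftMap_iter, shiftMap_iter]
      congr 1
      omega

lemma predUpTo_mono_aux {A : Type*} (X : Set (ℕ → A))
    (k₁ l₁ k₂ l₂ : ℕ) (hkl₁ : k₁ ≤ l₁) (hk : k₁ ≤ k₂) (hl : l₁ - k₁ ≤ l₂ - k₂)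
    (hkl₂ : k₂ ≤ l₂)
    (x x' : ℕ → A) (hagree : ∀ i < k₂, x i = x' i)
    (hp : predUpTo X l₂ (shiftMap^[k₂] x) ⊆ predUpTo X l₂ (shiftMap^[k₂] x')) :
    predUpTo X l₁ (shiftMap^[k₁] x) ⊆ predUpTo X l₁ (shiftMap^[k₁] x') := by
  rintro μ ⟨hlen, hmem⟩
  set w : List A := List.ofFn (fun i : Fin (k₂ - k₁) => x (k₁ + i)) with hw
  have hw' : w = List.ofFn (fun i : Fin (k₂ - k₁) => x' (k₁ + i)) := by
    simp only [hw]
    congr 1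
    funext i
    exact hagree _ (by omega)
  have h1 := word_shift μ x k₁ k₂ hk
  have h2 := word_shift μ x' k₁ k₂ hk
  rw [← hw'] at h2
  have hmem2 : μ ++ w ∈ predUpTo X l₂ (shiftMap^[k₂] x) := by
    refine ⟨?_, ?_⟩
    · simp only [List.length_append, hw, List.length_ofFn]; omega
    · rw [h1]; exact hmem
  have := hp hmem2
  exact ⟨hlen, by rw [← h2]; exact this.2⟩

/-- If `(k₁, l₁) ⪯ (k₂, l₂)` (i.e. `k₁ ≤ k₂` and `l₁ − k₁ ≤ l₂ − k₂`), then
`x ∼_{k₂,l₂} x'` implies `x ∼_{k₁,l₁} x'`. -/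
theorem klEquiv_mono {A : Type*} [Fintype A] [TopologicalSpace A] [DiscreteTopology A]
    (X : Set (ℕ → A)) (hX : IsShiftSpace X)
    (k₁ l₁ k₂ l₂ : ℕ) (hkl₁ : k₁ ≤ l₁) (hkl₂ : k₂ ≤ l₂)
    (hk : k₁ ≤ k₂) (hl : l₁ - k₁ ≤ l₂ - k₂)
    (x x' : ℕ → A) (hx : x ∈ X) (hx' : x' ∈ X)
    (h : klEquiv X k₂ l₂ x x') : klEquiv X k₁ l₁ x x' := by
  obtain ⟨ha, hp⟩ := h
  refine ⟨fun i hi => ha i (lt_of_lt_of_le hi hk), Set.Subset.antisymm ?_ ?_⟩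
  · exact predUpTo_mono_aux X k₁ l₁ k₂ l₂ hkl₁ hk hl hkl₂ x x' ha hp.le
  · exact predUpTo_mono_aux X k₁ l₁ k₂ l₂ hkl₁ hk hl hkl₂ x' x
      (fun i hi => (ha i hi).symm) hp.ge
end

section
/- If a one-sided shift space X contains a nonempty open set U consisting entirely of eventually periodic points, then X contains an isolated eventually periodic point, namely a point of the form αβ^∞ (a word α followed by the periodic repetition of a word β) which is isolated in X. -/
open Function Set

/-- A point is eventually periodic (equivalently, of the form `αβ^∞`) if
`σ^n(x) = σ^m(x)` for some `n ≠ m`. -/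
def EventuallyPeriodic {A : Type*} (x : ℕ → A) : Prop :=
  ∃ p m : ℕ, 0 < p ∧ shiftMap^[m + p] x = shiftMap^[m] x

lemma shiftMap_iterate_apply {A : Type*} (x : ℕ → A) (m k : ℕ) :
    (shiftMap^[m] x) k = x (m + k) := by
  induction m generalizing x k with
  | zero => simp
  | succ n ih =>
    rw [Function.iterate_succ_apply, ih]
    simp only [shiftMap]
    congr 1
    omega

/-- The set of points with eventual period `p` starting at `m` is finite. -/
lemma eventuallyPeriodic_set_finite {A : Type*} [Fintype A] (p m : ℕ) (hp : 0 < p) :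
    {x : ℕ → A | shiftMap^[m + p] x = shiftMap^[m] x}.Finite := by
  set S := {x : ℕ → A | shiftMap^[m + p] x = shiftMap^[m] x} with hS
  have key : ∀ x ∈ S, ∀ k, m ≤ k → x (k + p) = x k := by
    intro x hx k hk
    have := congrFun hx (k - m)
    rw [shiftMap_iterate_apply, shiftMap_iterate_apply] at this
    have h1 : m + p + (k - m) = k + p := by omega
    have h2 : m + (k - m) = k := by omega
    rwa [h1, h2] at this
  have inj : Function.Injective (fun x : S => (fun i : Fin (m + p) => (x : ℕ → A) i)) := by
    rintro ⟨x, hx⟩ ⟨y, hy⟩ hxy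
    have hfin : ∀ i < m + p, x i = y i := by
      intro i hi
      exact congrFun hxy ⟨i, hi⟩
    apply Subtype.ext
    show x = y
    funext k
    induction k using Nat.strong_induction_on with
    | _ k ih =>
      by_cases hk : k < m + p
      · exact hfin k hk
      · have hk' : k = (k - p) + p := by omega
        have hm : m ≤ k - p := by omega
        rw [hk', key x hx _ hm, key y hy _ hm]
        exact ih (k - p) (by omega)
  exact Set.finite_coe_iff.mp (Finite.of_injective _ inj)

/-- If a one-sided shift space `X` contains a nonempty (relatively) open set
consisting entirely of eventually periodic points, then `X` contains an isolated
eventually periodic point. -/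
theorem exists_isolated_eventuallyPeriodic {A : Type*} [Fintype A]
    [TopologicalSpace A] [DiscreteTopology A]
    (X : Set (ℕ → A)) (hX : IsShiftSpace X)
    (V : Set (ℕ → A)) (hV : IsOpen V) (hne : (V ∩ X).Nonempty)
    (hep : ∀ x ∈ V ∩ X, EventuallyPeriodic x) :
    ∃ x ∈ X, EventuallyPeriodic x ∧ ∃ U : Set (ℕ → A), IsOpen U ∧ U ∩ X = {x} := by
  -- `V ∩ X` is countable, being a union of the finite sets of periodic points.
  have hcnt : (V ∩ X).Countable := by
    have : V ∩ X ⊆ ⋃ pm : ℕ × ℕ,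
        {x : ℕ → A | shiftMap^[pm.2 + (pm.1 + 1)] x = shiftMap^[pm.2] x} := by
      intro x hx
      obtain ⟨p, m, hp, heq⟩ := hep x hx
      refine Set.mem_iUnion.mpr ⟨(p - 1, m), ?_⟩
      simpa [Nat.sub_add_cancel hp] using heq
    refine Set.Countable.mono this ?_
    exact Set.countable_iUnion fun pm =>
      (eventuallyPeriodic_set_finite (pm.1 + 1) pm.2 (Nat.succ_pos _)).countable
  -- pick a point and a clopen cylinder neighborhood inside `V`
  obtain ⟨x₀, hx₀⟩ := hne
  obtain ⟨I, u, hu, hsub⟩ := isOpen_pi_iff.mp hV x₀ hx₀.1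
  set n := (I.sup id) + 1 with hn
  set Cyl : Set (ℕ → A) := {y | ∀ i < n, y i = x₀ i} with hCyl
  have hCylV : Cyl ⊆ V := by
    intro y hy
    apply hsub
    intro i hi
    have hin : i < n := by
      have : i ≤ I.sup id := Finset.le_sup (f := id) hi
      omega
    rw [hy i hin]
    exact (hu i hi).2
  have hCyl_eq : Cyl = ⋂ i ∈ Finset.range n, (fun y : ℕ → A => y i) ⁻¹' {x₀ i} := by
    ext y
    simp [hCyl, Finset.mem_range]
  have hCyl_open : IsOpen Cyl := by
    rw [hCyl_eq]
    exact isOpen_biInter_finset fun i _ => (continuous_apply i).isOpen_preimage _ (isOpen_discrete _)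
  have hCyl_closed : IsClosed Cyl := by
    rw [hCyl_eq]
    exact isClosed_biInter fun i _ => IsClosed.preimage (continuous_apply i) isClosed_singleton
  have hx₀Cyl : x₀ ∈ Cyl := fun i _ => rfl
  -- the compact countable set `C`
  set C : Set (ℕ → A) := Cyl ∩ X with hC
  have hCsub : C ⊆ V ∩ X := fun y hy => ⟨hCylV hy.1, hy.2⟩
  have hCcl : IsClosed C := hCyl_closed.inter hX.1
  have hCcomp : IsCompact C := hCcl.isCompact
  have hCcnt : C.Countable := hcnt.mono hCsub
  haveI : CompactSpace ↥C := isCompact_iff_compactSpace.mp hCcomp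
  haveI : T2Space (ℕ → A) := inferInstance
  haveI : BaireSpace ↥C := by
    haveI : LocallyCompactSpace ↥C := inferInstance
    infer_instance
  haveI : Countable ↥C := hCcnt.to_subtype
  haveI : Nonempty ↥C := ⟨⟨x₀, hx₀Cyl, hx₀.2⟩⟩
  -- Baire: one of the singletons of `C` has nonempty interior in `C`
  obtain ⟨f, hf⟩ := exists_surjective_nat ↥C
  have hcover : ⋃ k, ({f k} : Set ↥C) = univ := by
    ext z
    simpa using hf z
  obtain ⟨k, hk⟩ := nonempty_interior_of_iUnion_of_closed
    (fun k => isClosed_singleton (x := f k)) hcover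
  have hint : interior ({f k} : Set ↥C) = {f k} := by
    apply Subset.antisymm interior_subset
    obtain ⟨z, hz⟩ := hk
    have hzk : z = f k := Set.mem_singleton_iff.mp (interior_subset hz)
    intro w hw
    rw [Set.mem_singleton_iff] at hw
    subst hw
    exact hzk ▸ hz
  have hopen : IsOpen ({f k} : Set ↥C) := hint ▸ isOpen_interior
  obtain ⟨W, hW, hWpre⟩ := isOpen_induced_iff.mp hopen
  set x := (f k : ℕ → A) with hxdef
  have hWC : W ∩ C = {x} := by
    ext y
    constructor
    · rintro ⟨hyW, hyC⟩
      have : (⟨y, hyC⟩ : ↥C) ∈ (Subtype.val ⁻¹' W : Set ↥C) := hyW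
      rw [hWpre] at this
      exact congrArg Subtype.val (Set.mem_singleton_iff.mp this)
    · rintro rfl
      have : f k ∈ (Subtype.val ⁻¹' W : Set ↥C) := by rw [hWpre]; rfl
      exact ⟨this, (f k).2⟩
  have hxC : x ∈ C := (f k).2
  refine ⟨x, hxC.2, hep x (hCsub hxC), W ∩ Cyl, hW.inter hCyl_open, ?_⟩
  rw [Set.inter_assoc]
  exact hWC
end

section
/- Let h: X → Y be a continuous orbit equivalence between one-sided shift spaces. Then h maps every nonisolated eventually periodic point of X to an eventually periodic point of Y. Moreover, if x = α^∞ is a periodic point of X with period p = |α| and k_X^{(p)}(x) = l_X^{(p)}(x), then x is an isolated point of X. -/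
open Function Set

/-- `x` is an isolated point of `X`. -/
def IsolatedIn {A : Type*} [TopologicalSpace A] (X : Set (ℕ → A)) (x : ℕ → A) : Prop :=
  ∃ U : Set (ℕ → A), IsOpen U ∧ U ∩ X = {x}

private lemma shift_iter_apply {A : Type*} (m : ℕ) (x : ℕ → A) (n : ℕ) :
    shiftMap^[m] x n = x (n + m) := by
  induction m generalizing x n with
  | zero => rfl
  | succ m ih =>
    rw [Function.iterate_succ_apply, ih]
    rfl

private lemma mem_iter {A : Type*} [TopologicalSpace A] {X : Set (ℕ → A)}
    (hX : IsShiftSpace X) {x : ℕ → A} (hx : x ∈ X) (m : ℕ) : shiftMap^[m] x ∈ X := by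
  induction m with
  | zero => exact hx
  | succ m ih => rw [Function.iterate_succ_apply']; exact hX.2 _ ih

private lemma continuous_shiftMap {A : Type*} [TopologicalSpace A] :
    Continuous (shiftMap : (ℕ → A) → (ℕ → A)) :=
  continuous_pi fun n => continuous_apply (n + 1)

private lemma cylinder_isOpen {A : Type*} [TopologicalSpace A] [DiscreteTopology A]
    (w : ℕ → A) (M : ℕ) : IsOpen {v : ℕ → A | ∀ i < M, v i = w i} := by
  have : {v : ℕ → A | ∀ i < M, v i = w i}
      = ⋂ i ∈ Finset.range M, (fun v : ℕ → A => v i) ⁻¹' {w i} := by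
    ext v; simp [Finset.mem_range]
  rw [this]
  exact isOpen_biInter_finset fun i _ =>
    (continuous_apply i).isOpen_preimage _ (isOpen_discrete _)

private lemma cylinder_subset {A : Type*} [TopologicalSpace A] [DiscreteTopology A]
    (w : ℕ → A) (U : Set (ℕ → A)) (hU : IsOpen U) (hw : w ∈ U) :
    ∃ M, ∀ v : ℕ → A, (∀ i < M, v i = w i) → v ∈ U := by
  have hmem : U ∈ nhds w := hU.mem_nhds hw
  rw [nhds_pi, Filter.mem_pi] at hmem
  obtain ⟨I, hIfin, t, ht, hsub⟩ := hmem
  obtain ⟨b, hb⟩ := hIfin.bddAbove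
  refine ⟨b + 1, fun v hv => hsub fun i hi => ?_⟩
  rw [hv i (Nat.lt_succ_of_le (hb hi))]
  exact mem_of_mem_nhds (ht i)

private lemma locally_const {A : Type*} [TopologicalSpace A] [DiscreteTopology A]
    {X : Set (ℕ → A)} (f : (ℕ → A) → ℕ) (hf : ContinuousOn f X) {w : ℕ → A} (hw : w ∈ X) :
    ∃ M, ∀ v ∈ X, (∀ i < M, v i = w i) → f v = f w := by
  have hT : f ⁻¹' {f w} ∈ nhdsWithin w X :=
    hf w hw ((isOpen_discrete ({f w} : Set ℕ)).mem_nhds rfl)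
  rw [mem_nhdsWithin] at hT
  obtain ⟨U, hU, hwU, hsub⟩ := hT
  obtain ⟨M, hM⟩ := cylinder_subset w U hU hwU
  exact ⟨M, fun v hv hvi => hsub ⟨hM v hvi, hv⟩⟩

private lemma per_mul {A : Type*} {u : ℕ → A} {q : ℕ} (hq : shiftMap^[q] u = u) (s : ℕ) :
    shiftMap^[s * q] u = u := by
  induction s with
  | zero => simp
  | succ s ih => rw [Nat.succ_mul, Function.iterate_add_apply, hq, ih]

private lemma per_apply {A : Type*} {u : ℕ → A} {q : ℕ} (hq : shiftMap^[q] u = u) (n : ℕ) :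
    u n = u (n % q) := by
  calc u n = shiftMap^[q * (n / q)] u (n % q) := by rw [shift_iter_apply, Nat.mod_add_div]
    _ = u (n % q) := by rw [mul_comm, per_mul hq]

private lemma ep_iter {A : Type*} {u : ℕ → A} (n : ℕ) :
    EventuallyPeriodic u → EventuallyPeriodic (shiftMap^[n] u) := by
  rintro ⟨p, m, hp, he⟩
  have comm : ∀ a, shiftMap^[a] (shiftMap^[n] u) = shiftMap^[n] (shiftMap^[a] u) := fun a => by
    rw [← Function.iterate_add_apply, ← Function.iterate_add_apply, add_comm]
  exact ⟨p, m, hp, by rw [comm, comm, he]⟩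

private lemma ep_of_iter {A : Type*} {u : ℕ → A} (n : ℕ) :
    EventuallyPeriodic (shiftMap^[n] u) → EventuallyPeriodic u := by
  rintro ⟨p, m, hp, he⟩
  refine ⟨p, m + n, hp, ?_⟩
  rw [← Function.iterate_add_apply, ← Function.iterate_add_apply] at he
  have e1 : (m + n) + p = (m + p) + n := by omega
  rw [e1, he]

private lemma cocycle_iter {A B : Type*} [TopologicalSpace A]
    {X : Set (ℕ → A)} (hX : IsShiftSpace X)
    {h : (ℕ → A) → (ℕ → B)} {kX lX : (ℕ → A) → ℕ}
    (hcocX : ∀ x ∈ X, shiftMap^[lX x] (h x) = shiftMap^[kX x] (h (shiftMap x)))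
    (n : ℕ) :
    ∀ x ∈ X, shiftMap^[∑ i ∈ Finset.range n, lX (shiftMap^[i] x)] (h x)
      = shiftMap^[∑ i ∈ Finset.range n, kX (shiftMap^[i] x)] (h (shiftMap^[n] x)) := by
  induction n with
  | zero => intro x _; simp
  | succ n ih =>
    intro x hx
    rw [Finset.sum_range_succ, Finset.sum_range_succ]
    have hxn : shiftMap^[n] x ∈ X := mem_iter hX hx n
    calc shiftMap^[(∑ i ∈ Finset.range n, lX (shiftMap^[i] x)) + lX (shiftMap^[n] x)] (h x)
        = shiftMap^[lX (shiftMap^[n] x)]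
            (shiftMap^[∑ i ∈ Finset.range n, lX (shiftMap^[i] x)] (h x)) := by
          rw [← Function.iterate_add_apply, add_comm]
      _ = shiftMap^[lX (shiftMap^[n] x)]
            (shiftMap^[∑ i ∈ Finset.range n, kX (shiftMap^[i] x)] (h (shiftMap^[n] x))) := by
          rw [ih x hx]
      _ = shiftMap^[∑ i ∈ Finset.range n, kX (shiftMap^[i] x)]
            (shiftMap^[lX (shiftMap^[n] x)] (h (shiftMap^[n] x))) := by
          rw [← Function.iterate_add_apply, ← Function.iterate_add_apply, add_comm]
      _ = shiftMap^[∑ i ∈ Finset.range n, kX (shiftMap^[i] x)]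
            (shiftMap^[kX (shiftMap^[n] x)] (h (shiftMap (shiftMap^[n] x)))) := by
          rw [hcocX _ hxn]
      _ = shiftMap^[(∑ i ∈ Finset.range n, kX (shiftMap^[i] x)) + kX (shiftMap^[n] x)]
            (h (shiftMap^[n + 1] x)) := by
          rw [← Function.iterate_add_apply, Function.iterate_succ_apply']

private lemma isolated_pull {A : Type*} [TopologicalSpace A] [DiscreteTopology A]
    {X : Set (ℕ → A)} (hX : IsShiftSpace X) {x : ℕ → A} (hx : x ∈ X) (m : ℕ)
    (hz : IsolatedIn X (shiftMap^[m] x)) : IsolatedIn X x := by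
  obtain ⟨U, hU, hUX⟩ := hz
  refine ⟨shiftMap^[m] ⁻¹' U ∩ {v | ∀ i < m, v i = x i},
    ((continuous_shiftMap.iterate m).isOpen_preimage U hU).inter (cylinder_isOpen x m), ?_⟩
  ext u
  constructor
  · rintro ⟨⟨hu1, hu2⟩, huX⟩
    have : shiftMap^[m] u ∈ U ∩ X := ⟨hu1, mem_iter hX huX m⟩
    rw [hUX] at this
    have heq : shiftMap^[m] u = shiftMap^[m] x := this
    have : u = x := by
      funext n
      rcases lt_or_ge n m with hn | hn
      · exact hu2 n hn
      · have e : n = (n - m) + m := by omega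
        have h2' := congrFun heq (n - m)
        rw [shift_iter_apply, shift_iter_apply] at h2'
        rw [e]; exact h2' 
    exact this
  · intro hu
    have hu' : u = x := hu
    rw [hu']
    have hxm : shiftMap^[m] x ∈ U ∩ X := by rw [hUX]; rfl
    exact ⟨⟨hxm.1, fun i _ => rfl⟩, hx⟩

private lemma isolated_key {A B : Type*}
    [TopologicalSpace A] [DiscreteTopology A] [Fintype B]
    {X : Set (ℕ → A)}
    (hX : IsShiftSpace X)
    {h : (ℕ → A) → (ℕ → B)} {h' : (ℕ → B) → (ℕ → A)}
    {kX lX : (ℕ → A) → ℕ}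
    (hleft : ∀ x ∈ X, h' (h x) = x)
    (hkXc : ContinuousOn kX X) (hlXc : ContinuousOn lX X)
    (hcocX : ∀ x ∈ X, shiftMap^[lX x] (h x) = shiftMap^[kX x] (h (shiftMap x)))
    {x : ℕ → A} (hx : x ∈ X) {p : ℕ} (hp : 0 < p) (hper : shiftMap^[p] x = x)
    (hsum : (∑ i ∈ Finset.range p, kX (shiftMap^[i] x)) =
      ∑ i ∈ Finset.range p, lX (shiftMap^[i] x)) :
    IsolatedIn X x := by
  classical
  by_contra hniso
  -- local constancy of the cocycles around the orbit of x
  have hMex : ∀ i : ℕ, ∃ M, ∀ v ∈ X, (∀ j < M, v j = shiftMap^[i] x j) →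
      kX v = kX (shiftMap^[i] x) ∧ lX v = lX (shiftMap^[i] x) := by
    intro i
    obtain ⟨M1, h1⟩ := locally_const kX hkXc (mem_iter hX hx i)
    obtain ⟨M2, h2⟩ := locally_const lX hlXc (mem_iter hX hx i)
    exact ⟨max M1 M2, fun v hv hvj =>
      ⟨h1 v hv fun j hj => hvj j (lt_of_lt_of_le hj (le_max_left _ _)),
       h2 v hv fun j hj => hvj j (lt_of_lt_of_le hj (le_max_right _ _))⟩⟩
  choose M hM using hMex
  set M₀ : ℕ := p + (Finset.range p).sup M with hM₀def
  set c : ℕ := ∑ i ∈ Finset.range p, lX (shiftMap^[i] x) with hcdef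
  -- key local relation
  have hnear : ∀ w ∈ X, (∀ j < M₀, w j = x j) →
      shiftMap^[c] (h w) = shiftMap^[c] (h (shiftMap^[p] w)) := by
    intro w hw hwj
    have hagree : ∀ i < p, ∀ j < M i, shiftMap^[i] w j = shiftMap^[i] x j := by
      intro i hi j hj
      rw [shift_iter_apply, shift_iter_apply]
      apply hwj
      have h1 : M i ≤ (Finset.range p).sup M := Finset.le_sup (Finset.mem_range.mpr hi)
      omega
    have hks : ∑ i ∈ Finset.range p, kX (shiftMap^[i] w)
        = ∑ i ∈ Finset.range p, kX (shiftMap^[i] x) :=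
      Finset.sum_congr rfl fun i hi =>
        (hM i _ (mem_iter hX hw i) (hagree i (Finset.mem_range.mp hi))).1
    have hls : ∑ i ∈ Finset.range p, lX (shiftMap^[i] w)
        = ∑ i ∈ Finset.range p, lX (shiftMap^[i] x) :=
      Finset.sum_congr rfl fun i hi =>
        (hM i _ (mem_iter hX hw i) (hagree i (Finset.mem_range.mp hi))).2
    have hco := cocycle_iter hX hcocX p w hw
    rw [hks, hls, hsum] at hco
    exact hco
  set C : ℕ := Fintype.card (Fin c → B) with hCdef
  set N : ℕ := M₀ + (C + 1) * p with hNdef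
  have hCp1 : (C + 1) * p = C * p + p := by ring
  -- extract a close point z ≠ x
  have hzex : ∃ z, z ∈ X ∧ z ≠ x ∧ ∀ i < N, z i = x i := by
    have hne : {v : ℕ → A | ∀ i < N, v i = x i} ∩ X ≠ {x} := fun he =>
      hniso ⟨_, cylinder_isOpen x N, he⟩
    have hss : {x} ⊆ {v : ℕ → A | ∀ i < N, v i = x i} ∩ X := by
      rintro v rfl; exact ⟨fun i _ => rfl, hx⟩
    obtain ⟨z, hz1, hz2⟩ := exists_of_ssubset (hss.ssubset_of_ne (Ne.symm hne))
    exact ⟨z, hz1.2, fun he => hz2 (by rw [he]; rfl), hz1.1⟩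
  obtain ⟨z, hzX, hzne, hzagr⟩ := hzex
  -- first disagreement index
  have hdex : ∃ n, z n ≠ x n := by
    by_contra hcon; push_neg at hcon; exact hzne (funext hcon)
  set d : ℕ := Nat.find hdex with hddef
  have hd_ne : z d ≠ x d := Nat.find_spec hdex
  have hd_min : ∀ i < d, z i = x i := fun i hi => not_not.mp (Nat.find_min hdex hi)
  have hNd : N ≤ d := by
    by_contra hcon; push_neg at hcon; exact hd_ne (hzagr d hcon)
  -- the points u s
  set u : ℕ → (ℕ → A) := fun s => shiftMap^[s * p] z with hudef
  have hu_mem : ∀ s, u s ∈ X := fun s => mem_iter hX hzX _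
  have hxs : ∀ s, shiftMap^[s * p] x = x := fun s => per_mul hper s
  have hxper : ∀ n s : ℕ, x (n + s * p) = x n := by
    intro n s
    conv_rhs => rw [← hxs s]
    rw [shift_iter_apply]
  have hu_agr : ∀ s j, j + s * p < d → u s j = x j := by
    intro s j hj
    have : u s j = z (j + s * p) := shift_iter_apply _ _ _
    rw [this, hd_min _ hj, hxper]
  -- the chain of equal tails
  have hchain : ∀ s, s ≤ C → shiftMap^[c] (h (u s)) = shiftMap^[c] (h z) := by
    intro s hs
    induction s with
    | zero => simp [hudef]
    | succ s ih =>
      have hsC : s ≤ C := Nat.le_of_succ_le hs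
      have hstep : u (s + 1) = shiftMap^[p] (u s) := by
        show shiftMap^[(s + 1) * p] z = _
        rw [Nat.succ_mul, add_comm, Function.iterate_add_apply]
      have hnearu := hnear (u s) (hu_mem s) fun j hj => hu_agr s j (by
        have h1 : s * p ≤ C * p := Nat.mul_le_mul_right p hsC
        omega)
      rw [hstep, ← hnearu, ih hsC]
  -- pigeonhole on prefixes
  have hcard : Fintype.card (Fin c → B) < Fintype.card (Fin (C + 1)) := by
    rw [Fintype.card_fin]; omega
  obtain ⟨s, t, hst, hF⟩ := Fintype.exists_ne_map_eq_of_card_lt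
    (fun s : Fin (C + 1) => fun i : Fin c => h (u s.val) i.val) hcard
  -- wlog s < t, and get u s = u t
  have main : ∀ s t : Fin (C + 1), s.val < t.val →
      (fun i : Fin c => h (u s.val) i.val) = (fun i : Fin c => h (u t.val) i.val) → False := by
    intro s t hlt hFe
    have hsC : s.val ≤ C := Nat.lt_succ_iff.mp s.isLt
    have htC : t.val ≤ C := Nat.lt_succ_iff.mp t.isLt
    have hhe : h (u s.val) = h (u t.val) := by
      funext n
      rcases lt_or_ge n c with hn | hn
      · exact congrFun hFe ⟨n, hn⟩
      · have e : n = (n - c) + c := by omega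
        have := congrFun ((hchain s.val hsC).trans (hchain t.val htC).symm) (n - c)
        rw [shift_iter_apply, shift_iter_apply] at this
        rw [e]; exact this
    have hue : u s.val = u t.val := by
      rw [← hleft _ (hu_mem s.val), ← hleft _ (hu_mem t.val), hhe]
    set q : ℕ := (t.val - s.val) * p with hqdef
    have hq : 0 < q := Nat.mul_pos (by omega) hp
    have huq : shiftMap^[q] (u s.val) = u s.val := by
      have : q + s.val * p = t.val * p := by
        rw [hqdef, ← Nat.add_mul]; congr 1; omega
      show shiftMap^[q] (shiftMap^[s.val * p] z) = _
      rw [← Function.iterate_add_apply, this]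
      exact hue.symm
    have hxq : shiftMap^[q] x = x := hxs _
    -- u s = x
    have husx : u s.val = x := by
      funext n
      rw [per_apply huq n, per_apply hxq n]
      apply hu_agr
      have h1 : n % q < q := Nat.mod_lt _ hq
      have h2 : q + s.val * p ≤ t.val * p := by
        rw [hqdef, ← Nat.add_mul]
        exact Nat.mul_le_mul_right p (by omega)
      have h3 : t.val * p ≤ C * p := Nat.mul_le_mul_right p htC
      omega
    -- hence z = x
    apply hzne
    funext n
    rcases lt_or_ge n d with hn | hn
    · exact hd_min n hn
    · have hsp : s.val * p ≤ n := by
        have h3 : s.val * p ≤ C * p := Nat.mul_le_mul_right p hsC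
        omega
      have h4 : u s.val (n - s.val * p) = z ((n - s.val * p) + s.val * p) :=
        shift_iter_apply _ _ _
      have h5 : (n - s.val * p) + s.val * p = n := by omega
      rw [h5] at h4
      rw [← h4, husx]
      conv_rhs => rw [← h5]
      exact (hxper _ _).symm
  rcases Nat.lt_or_ge s.val t.val with hlt | hge
  · exact main s t hlt hF
  · have hlt : t.val < s.val := by
      rcases Nat.lt_or_ge t.val s.val with h1 | h1
      · exact h1
      · exact absurd (Fin.ext (Nat.le_antisymm hge h1)).symm hst
    exact main t s hlt hF.symm

/-- A continuous orbit equivalence `h : X → Y` maps every nonisolated eventually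
periodic point to an eventually periodic point; moreover, if `x` is a periodic point
with period `p` and `k_X^{(p)}(x) = l_X^{(p)}(x)`, then `x` is isolated. -/
theorem coe_maps_nonisolated_eventuallyPeriodic {A B : Type*} [Fintype A]
    [TopologicalSpace A] [DiscreteTopology A] [Fintype B] [TopologicalSpace B]
    [DiscreteTopology B]
    (X : Set (ℕ → A)) (Y : Set (ℕ → B))
    (hX : IsShiftSpace X) (hY : IsShiftSpace Y)
    (h : (ℕ → A) → (ℕ → B)) (h' : (ℕ → B) → (ℕ → A))
    (kX lX : (ℕ → A) → ℕ) (kY lY : (ℕ → B) → ℕ)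
    (hm : MapsTo h X Y) (hm' : MapsTo h' Y X)
    (hleft : ∀ x ∈ X, h' (h x) = x) (hright : ∀ y ∈ Y, h (h' y) = y)
    (hc : ContinuousOn h X) (hc' : ContinuousOn h' Y)
    (hkXc : ContinuousOn kX X) (hlXc : ContinuousOn lX X)
    (hkYc : ContinuousOn kY Y) (hlYc : ContinuousOn lY Y)
    (hcocX : ∀ x ∈ X, shiftMap^[lX x] (h x) = shiftMap^[kX x] (h (shiftMap x)))
    (hcocY : ∀ y ∈ Y, shiftMap^[lY y] (h' y) = shiftMap^[kY y] (h' (shiftMap y))) :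
    (∀ x ∈ X, EventuallyPeriodic x → ¬ IsolatedIn X x → EventuallyPeriodic (h x)) ∧
      (∀ x ∈ X, ∀ p : ℕ, 0 < p → shiftMap^[p] x = x →
        (∑ i ∈ Finset.range p, kX (shiftMap^[i] x)) =
          (∑ i ∈ Finset.range p, lX (shiftMap^[i] x)) →
        IsolatedIn X x) := by
  constructor
  · rintro x hx ⟨p, m, hp, hper⟩ hniso
    -- z = σ^m x is p-periodic
    set z : ℕ → A := shiftMap^[m] x with hzdef
    have hzX : z ∈ X := mem_iter hX hx m
    have hperz : shiftMap^[p] z = z := by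
      rw [add_comm, Function.iterate_add_apply] at hper
      exact hper
    set K : ℕ := ∑ i ∈ Finset.range p, kX (shiftMap^[i] z) with hKdef
    set L : ℕ := ∑ i ∈ Finset.range p, lX (shiftMap^[i] z) with hLdef
    by_cases hKL : K = L
    · -- z is isolated, hence x is isolated: contradiction
      exact absurd (isolated_pull hX hx m
        (isolated_key hX hleft hkXc hlXc hcocX hzX hp hperz hKL)) hniso
    · -- h z is eventually periodic
      have hco := cocycle_iter hX hcocX p z hzX
      rw [hperz] at hco
      have hepz : EventuallyPeriodic (h z) := by
        rcases Nat.lt_or_ge K L with hlt | hge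
        · refine ⟨L - K, K, by omega, ?_⟩
          have e : K + (L - K) = L := by omega
          rw [e, hco]
        · have hlt : L < K := by omega
          refine ⟨K - L, L, by omega, ?_⟩
          have e : L + (K - L) = K := by omega
          rw [e, ← hco]
      -- transfer to h x
      have hco2 := cocycle_iter hX hcocX m x hx
      apply ep_of_iter (∑ i ∈ Finset.range m, lX (shiftMap^[i] x))
      rw [hco2]
      exact ep_iter _ hepz
  · intro x hx p hp hper hsum
    exact isolated_key hX hleft hkXc hlXc hcocX hx hp hper hsum
end

section
/- Let X and Y be one-sided shift spaces with surjective shift maps, and suppose φ: X → Y is a sliding block code which is almost injective with lag ℓ₁ (φ(x) = φ(x') implies σ_X^{ℓ₁}(x) = σ_X^{ℓ₁}(x')) and almost surjective with lag ℓ₂ (for each y ∈ Y there is x ∈ X with σ_Y^{ℓ₂}(φ(x)) = σ_Y^{ℓ₂}(y)). Then the map h: Λ_X → Λ_Y defined on the inverse limits by h((..., x₂, x₁, x₀)) = (..., φ(x₂), φ(x₁), φ(x₀)) is a bijection (in fact a conjugacy of the two-sided shift spaces). -/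
open Function Set

/-- The two-sided shift space `Λ_X` as the inverse limit `lim← (X, σ_X)`, realized
as sequences `(..., x₂, x₁, x₀)` with `x_i ∈ X` and `σ_X(x_{i+1}) = x_i`. -/
def invLimit {A : Type*} (X : Set (ℕ → A)) : Set (ℕ → ℕ → A) :=
  {F : ℕ → ℕ → A | ∀ i : ℕ, F i ∈ X ∧ shiftMap (F (i + 1)) = F i}

lemma iter_mem {A : Type*} [TopologicalSpace A] {X : Set (ℕ → A)}
    (hX : IsShiftSpace X) (k : ℕ) {x : ℕ → A} (hx : x ∈ X) : shiftMap^[k] x ∈ X := by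
  induction k with
  | zero => simpa
  | succ n ih => rw [Function.iterate_succ_apply']; exact hX.2 _ ih

lemma inv_iter {A : Type*} {X : Set (ℕ → A)} {F : ℕ → ℕ → A}
    (hF : F ∈ invLimit X) (i k : ℕ) : shiftMap^[k] (F (i + k)) = F i := by
  induction k with
  | zero => simp
  | succ n ih =>
      rw [Function.iterate_succ_apply']
      have h1 : shiftMap (shiftMap^[n] (F (i + n + 1)))
          = shiftMap^[n] (shiftMap (F (i + n + 1))) :=
        (Function.iterate_succ_apply' shiftMap n _).symm.trans
          (Function.iterate_succ_apply shiftMap n _)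
      show shiftMap (shiftMap^[n] (F (i + n + 1))) = F i
      rw [h1, (hF (i + n)).2, ih]

lemma phi_iter {A B : Type*} [TopologicalSpace A]
    {X : Set (ℕ → A)} (hX : IsShiftSpace X)
    {φ : (ℕ → A) → (ℕ → B)}
    (hφe : ∀ x ∈ X, φ (shiftMap x) = shiftMap (φ x))
    (k : ℕ) {x : ℕ → A} (hx : x ∈ X) : φ (shiftMap^[k] x) = shiftMap^[k] (φ x) := by
  induction k with
  | zero => simp
  | succ n ih =>
      rw [Function.iterate_succ_apply', Function.iterate_succ_apply', ← ih,
        hφe _ (iter_mem hX n hx)]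

/-- If `φ : X → Y` is a sliding block code which is almost injective with lag `ℓ₁`
and almost surjective with lag `ℓ₂`, then the induced map
`h((..., x₂, x₁, x₀)) = (..., φ(x₂), φ(x₁), φ(x₀))` between the inverse limits is a
bijection, in fact a conjugacy of the two-sided shift spaces. -/
theorem induced_map_on_invLimit_bijective {A B : Type*} [Fintype A]
    [TopologicalSpace A] [DiscreteTopology A] [Fintype B] [TopologicalSpace B]
    [DiscreteTopology B]
    (X : Set (ℕ → A)) (Y : Set (ℕ → B))
    (hX : IsShiftSpace X) (hY : IsShiftSpace Y)
    (hXsurj : SurjOn shiftMap X X) (hYsurj : SurjOn shiftMap Y Y)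
    (φ : (ℕ → A) → (ℕ → B)) (hφc : ContinuousOn φ X) (hφm : MapsTo φ X Y)
    (hφe : ∀ x ∈ X, φ (shiftMap x) = shiftMap (φ x))
    (ℓ₁ ℓ₂ : ℕ)
    (hai : ∀ x ∈ X, ∀ x' ∈ X, φ x = φ x' → shiftMap^[ℓ₁] x = shiftMap^[ℓ₁] x')
    (has : ∀ y ∈ Y, ∃ x ∈ X, shiftMap^[ℓ₂] (φ x) = shiftMap^[ℓ₂] y) :
    Set.BijOn (fun (F : ℕ → ℕ → A) (i : ℕ) => φ (F i)) (invLimit X) (invLimit Y) ∧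
      (∀ F ∈ invLimit X,
        (fun i : ℕ => φ (shiftMap (F i))) = fun i : ℕ => shiftMap (φ (F i))) ∧
      ContinuousOn (fun (F : ℕ → ℕ → A) (i : ℕ) => φ (F i)) (invLimit X) := by

  constructor
  · refine ⟨?_, ?_, ?_⟩
    · -- MapsTo
      intro F hF i
      refine ⟨hφm (hF i).1, ?_⟩
      show shiftMap (φ (F (i + 1))) = φ (F i)
      rw [← hφe _ (hF (i + 1)).1, (hF i).2]
    · -- InjOn
      intro F hF G hG h
      funext i
      have h1 : φ (F (i + ℓ₁)) = φ (G (i + ℓ₁)) := congrFun h (i + ℓ₁)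
      have h2 := hai _ (hF (i + ℓ₁)).1 _ (hG (i + ℓ₁)).1 h1
      rw [← inv_iter hF i ℓ₁, ← inv_iter hG i ℓ₁, h2]
    · -- SurjOn
      intro G hG
      have hz : ∀ m, ∃ x ∈ X, φ x = G m := by
        intro m
        obtain ⟨x, hx, hxe⟩ := has (G (m + ℓ₂)) (hG (m + ℓ₂)).1
        exact ⟨shiftMap^[ℓ₂] x, iter_mem hX ℓ₂ hx, by
          rw [phi_iter hX hφe ℓ₂ hx, hxe, inv_iter hG m ℓ₂]⟩
      choose z hzX hzφ using hz
      have key : ∀ m, shiftMap^[ℓ₁] (shiftMap (z (m + 1))) = shiftMap^[ℓ₁] (z m) := by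
        intro m
        refine hai _ (hX.2 _ (hzX (m + 1))) _ (hzX m) ?_
        rw [hφe _ (hzX (m + 1)), hzφ, hzφ, (hG m).2]
      refine ⟨fun m => shiftMap^[ℓ₁] (z (m + ℓ₁)), fun m => ⟨iter_mem hX ℓ₁ (hzX _), ?_⟩, ?_⟩
      · have h1 : shiftMap (shiftMap^[ℓ₁] (z (m + 1 + ℓ₁)))
            = shiftMap^[ℓ₁] (shiftMap (z (m + 1 + ℓ₁))) :=
          (Function.iterate_succ_apply' shiftMap ℓ₁ _).symm.trans
            (Function.iterate_succ_apply shiftMap ℓ₁ _)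
        have h2 : m + 1 + ℓ₁ = m + ℓ₁ + 1 := by omega
        rw [h1, h2, key]
      · funext m
        show φ (shiftMap^[ℓ₁] (z (m + ℓ₁))) = G m
        rw [phi_iter hX hφe ℓ₁ (hzX _), hzφ, inv_iter hG m ℓ₁]
  constructor
  · intro F hF
    funext i
    exact hφe _ (hF i).1
  · rw [continuousOn_pi]
    intro i
    exact hφc.comp (continuous_apply i).continuousOn (fun F hF => (hF i).1)
end

section
/- Let Λ_X and Λ_Y be two-sided shift spaces that are conjugate via a conjugacy H: Λ_X → Λ_Y, and assume (after recoding) that x_{[0,∞)} = x'_{[0,∞)} implies H(x)_{[0,∞)} = H(x')_{[0,∞)} and that y_{[0,∞)} = y'_{[0,∞)} implies H^{-1}(y)_{[ℓ,∞)} = H^{-1}(y')_{[ℓ,∞)} for some ℓ ∈ ℕ. Then the map φ: X → Y defined by φ(x_{[0,∞)}) = H(x)_{[0,∞)} is a well-defined surjective sliding block code which is almost injective with lag ℓ: φ(x) = φ(x') implies σ_X^ℓ(x) = σ_X^ℓ(x'). -/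
open Function Set

/-- The two-sided shift map on `A^ℤ`. -/
def shiftZ {A : Type*} : (ℤ → A) → (ℤ → A) := fun x n => x (n + 1)

/-- Restriction of a two-sided sequence to its nonnegative coordinates. -/
def restrictNonneg {A : Type*} : (ℤ → A) → (ℕ → A) := fun x n => x (n : ℤ)

lemma continuous_restrictNonneg {A : Type*} [TopologicalSpace A] :
    Continuous (restrictNonneg : (ℤ → A) → (ℕ → A)) :=
  continuous_pi fun n => continuous_apply ((n : ℕ) : ℤ)

lemma shiftMap_iterate {A : Type*} (u : ℕ → A) (k n : ℕ) :
    shiftMap^[k] u n = u (n + k) := by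
  induction k generalizing u with
  | zero => simp
  | succ k ih =>
    rw [Function.iterate_succ_apply, ih]
    simp [shiftMap, Nat.add_assoc, Nat.add_comm 1 k]

/-- If `H : Λ_X → Λ_Y` is a conjugacy of two-sided shift spaces such that
`x_{[0,∞)} = x'_{[0,∞)}` implies `H(x)_{[0,∞)} = H(x')_{[0,∞)}` and
`y_{[0,∞)} = y'_{[0,∞)}` implies `H⁻¹(y)_{[ℓ,∞)} = H⁻¹(y')_{[ℓ,∞)}`, then
`φ(x_{[0,∞)}) = H(x)_{[0,∞)}` is a well-defined surjective sliding block code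
from `X` to `Y` which is almost injective with lag `ℓ`. -/
theorem conjugacy_induces_sliding_block_code {A B : Type*} [Fintype A]
    [TopologicalSpace A] [DiscreteTopology A] [Fintype B] [TopologicalSpace B]
    [DiscreteTopology B]
    (ΛX : Set (ℤ → A)) (ΛY : Set (ℤ → B))
    (hΛXc : IsClosed ΛX) (hΛXi : ∀ x : ℤ → A, x ∈ ΛX ↔ shiftZ x ∈ ΛX)
    (hΛYc : IsClosed ΛY) (hΛYi : ∀ y : ℤ → B, y ∈ ΛY ↔ shiftZ y ∈ ΛY)
    (H : (ℤ → A) → (ℤ → B)) (H' : (ℤ → B) → (ℤ → A))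
    (hHm : MapsTo H ΛX ΛY) (hH'm : MapsTo H' ΛY ΛX)
    (hleft : ∀ x ∈ ΛX, H' (H x) = x) (hright : ∀ y ∈ ΛY, H (H' y) = y)
    (hHc : ContinuousOn H ΛX) (hH'c : ContinuousOn H' ΛY)
    (hHe : ∀ x ∈ ΛX, H (shiftZ x) = shiftZ (H x))
    (ℓ : ℕ)
    (hfwd : ∀ x ∈ ΛX, ∀ x' ∈ ΛX, (∀ n : ℕ, x (n : ℤ) = x' (n : ℤ)) →
      ∀ n : ℕ, H x (n : ℤ) = H x' (n : ℤ))
    (hbwd : ∀ y ∈ ΛY, ∀ y' ∈ ΛY, (∀ n : ℕ, y (n : ℤ) = y' (n : ℤ)) →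
      ∀ n : ℤ, (ℓ : ℤ) ≤ n → H' y n = H' y' n) :
    ∃ φ : (ℕ → A) → (ℕ → B),
      (∀ x ∈ ΛX, φ (restrictNonneg x) = restrictNonneg (H x)) ∧
      MapsTo φ (restrictNonneg '' ΛX) (restrictNonneg '' ΛY) ∧
      SurjOn φ (restrictNonneg '' ΛX) (restrictNonneg '' ΛY) ∧
      ContinuousOn φ (restrictNonneg '' ΛX) ∧
      (∀ x ∈ restrictNonneg '' ΛX, φ (shiftMap x) = shiftMap (φ x)) ∧
      (∀ x ∈ restrictNonneg '' ΛX, ∀ x' ∈ restrictNonneg '' ΛX,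
        φ x = φ x' → shiftMap^[ℓ] x = shiftMap^[ℓ] x') := by
    classical
  set S := restrictNonneg '' ΛX with hS
  set φ : (ℕ → A) → (ℕ → B) := fun u =>
    if h : u ∈ S then restrictNonneg (H h.choose)
    else restrictNonneg (H fun _ => u 0) with hφ
  have key : ∀ x ∈ ΛX, φ (restrictNonneg x) = restrictNonneg (H x) := by
    intro x hx
    have h : restrictNonneg x ∈ S := ⟨x, hx, rfl⟩
    obtain ⟨hx0, he⟩ := h.choose_spec
    have heq : ∀ n : ℕ, h.choose (n : ℤ) = x (n : ℤ) := fun n => congrFun he n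
    simp only [hφ, dif_pos h]
    funext n
    exact hfwd _ hx0 _ hx heq n
  refine ⟨φ, key, ?_, ?_, ?_, ?_, ?_⟩
  · rintro u ⟨x, hx, rfl⟩
    rw [key x hx]
    exact ⟨H x, hHm hx, rfl⟩
  · rintro v ⟨y, hy, rfl⟩
    refine ⟨restrictNonneg (H' y), ⟨H' y, hH'm hy, rfl⟩, ?_⟩
    rw [key _ (hH'm hy), hright y hy]
  · -- continuity
    haveI : CompactSpace (ℤ → A) := by infer_instance
    have hKc : IsCompact ΛX := hΛXc.isCompact
    haveI : CompactSpace ΛX := isCompact_iff_compactSpace.mp hKc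
    rw [continuousOn_iff_continuous_restrict]
    set r : ΛX → S := fun x => ⟨restrictNonneg x.1, ⟨x.1, x.2, rfl⟩⟩ with hr
    have hrc : Continuous r := by
      apply Continuous.subtype_mk
      exact continuous_restrictNonneg.comp continuous_subtype_val
    have hrs : Function.Surjective r := by
      rintro ⟨u, x, hx, rfl⟩
      exact ⟨⟨x, hx⟩, rfl⟩
    have hq : Topology.IsQuotientMap r := hrc.isClosedMap.isQuotientMap hrc hrs
    rw [hq.continuous_iff]
    have : (S.domRestrict φ) ∘ r = fun x : ΛX => restrictNonneg (H x.1) := by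
      funext x
      exact key x.1 x.2
    rw [this]
    exact continuous_restrictNonneg.comp hHc.restrict
  · rintro u ⟨x, hx, rfl⟩
    have h1 : shiftMap (restrictNonneg x) = restrictNonneg (shiftZ x) := by
      funext n
      simp [shiftMap, restrictNonneg, shiftZ]
    rw [h1, key _ ((hΛXi x).mp hx), key x hx, hHe x hx]
    funext n
    simp [shiftMap, restrictNonneg, shiftZ]
  · rintro u ⟨x, hx, rfl⟩ u' ⟨x', hx', rfl⟩ heq
    rw [key x hx, key x' hx'] at heq
    have hyY := hHm hx
    have hyY' := hHm hx'
    have h2 : ∀ n : ℤ, (ℓ : ℤ) ≤ n → x n = x' n := by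
      intro n hn
      have := hbwd _ hyY _ hyY' (fun n => congrFun heq n) n hn
      rwa [hleft x hx, hleft x' hx'] at this
    funext n
    rw [shiftMap_iterate, shiftMap_iterate]
    have : ((n + ℓ : ℕ) : ℤ) = (n : ℤ) + ℓ := by push_cast; ring
    show x ((n + ℓ : ℕ) : ℤ) = x' ((n + ℓ : ℕ) : ℤ)
    apply h2
    omega
end

section
/- Let X and Y be one-sided shift spaces and let (h, l_X, k_X, l_Y, k_Y) be a stabilizer-preserving continuous orbit equivalence which is positive, meaning l_X − k_X = n_X + b_X − b_X∘σ_X for some continuous n_X: X → ℕ and b_X: X → ℤ, and similarly for l_Y − k_Y. Then for every periodic point x ∈ X with least period p, one has l_X^{(p)}(x) − k_X^{(p)}(x) = Σ_{i=0}^{p-1} n_X(σ_X^i(x)) ≥ 0, and hence l_X^{(p)}(x) − k_X^{(p)}(x) = lp(h(x)); that is, the orbit equivalence is least period preserving. -/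
open Function Set

/-- `p` is the least period `lp(x)` of an eventually periodic point `x`:
the minimum of `{p ∈ ℕ₊ : ∃ n m, p = n − m, σ^n(x) = σ^m(x)}`. -/
def IsLeastPeriod {A : Type*} (x : ℕ → A) (p : ℕ) : Prop :=
  (0 < p ∧ ∃ m : ℕ, shiftMap^[m + p] x = shiftMap^[m] x) ∧
    ∀ q : ℕ, (0 < q ∧ ∃ m : ℕ, shiftMap^[m + q] x = shiftMap^[m] x) → p ≤ q

/-- A positive stabilizer-preserving continuous orbit equivalence is least period
preserving: for every periodic `x ∈ X` with least period `p`, the difference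
`l_X^{(p)}(x) − k_X^{(p)}(x)` equals `Σ_{i<p} n_X(σ_X^i(x)) ≥ 0`, and hence equals
the least period of `h(x)`. -/
theorem positive_stabilizer_preserving_is_least_period_preserving
    {A B : Type*} [Fintype A] [TopologicalSpace A] [DiscreteTopology A]
    [Fintype B] [TopologicalSpace B] [DiscreteTopology B]
    (X : Set (ℕ → A)) (Y : Set (ℕ → B))
    (hX : IsShiftSpace X) (hY : IsShiftSpace Y)
    (h : (ℕ → A) → (ℕ → B)) (h' : (ℕ → B) → (ℕ → A))
    (kX lX : (ℕ → A) → ℕ) (kY lY : (ℕ → B) → ℕ)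
    (hm : MapsTo h X Y) (hm' : MapsTo h' Y X)
    (hleft : ∀ x ∈ X, h' (h x) = x) (hright : ∀ y ∈ Y, h (h' y) = y)
    (hc : ContinuousOn h X) (hc' : ContinuousOn h' Y)
    (hkXc : ContinuousOn kX X) (hlXc : ContinuousOn lX X)
    (hkYc : ContinuousOn kY Y) (hlYc : ContinuousOn lY Y)
    (hcocX : ∀ x ∈ X, shiftMap^[lX x] (h x) = shiftMap^[kX x] (h (shiftMap x)))
    (hcocY : ∀ y ∈ Y, shiftMap^[lY y] (h' y) = shiftMap^[kY y] (h' (shiftMap y)))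
    -- stabilizer-preserving
    (hepX : ∀ x ∈ X, EventuallyPeriodic x → EventuallyPeriodic (h x))
    (hepY : ∀ y ∈ Y, EventuallyPeriodic y → EventuallyPeriodic (h' y))
    (hspX : ∀ x ∈ X, ∀ p : ℕ, (∃ q : ℕ, 0 < q ∧ shiftMap^[q] x = x) →
      IsLeastPeriod x p → ∀ q : ℕ, IsLeastPeriod (h x) q →
        |(∑ i ∈ Finset.range p, (lX (shiftMap^[i] x) : ℤ)) -
          ∑ i ∈ Finset.range p, (kX (shiftMap^[i] x) : ℤ)| = (q : ℤ))
    (hspY : ∀ y ∈ Y, ∀ p : ℕ, (∃ q : ℕ, 0 < q ∧ shiftMap^[q] y = y) →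
      IsLeastPeriod y p → ∀ q : ℕ, IsLeastPeriod (h' y) q →
        |(∑ i ∈ Finset.range p, (lY (shiftMap^[i] y) : ℤ)) -
          ∑ i ∈ Finset.range p, (kY (shiftMap^[i] y) : ℤ)| = (q : ℤ))
    -- positivity
    (nX : (ℕ → A) → ℕ) (bX : (ℕ → A) → ℤ)
    (hnXc : ContinuousOn nX X) (hbXc : ContinuousOn bX X)
    (hposX : ∀ x ∈ X, (lX x : ℤ) - (kX x : ℤ) = (nX x : ℤ) + bX x - bX (shiftMap x))
    (nY : (ℕ → B) → ℕ) (bY : (ℕ → B) → ℤ)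
    (hnYc : ContinuousOn nY Y) (hbYc : ContinuousOn bY Y)
    (hposY : ∀ y ∈ Y, (lY y : ℤ) - (kY y : ℤ) = (nY y : ℤ) + bY y - bY (shiftMap y)) :
    ∀ x ∈ X, ∀ p : ℕ, (∃ q : ℕ, 0 < q ∧ shiftMap^[q] x = x) → IsLeastPeriod x p →
      ((∑ i ∈ Finset.range p, (lX (shiftMap^[i] x) : ℤ)) -
          ∑ i ∈ Finset.range p, (kX (shiftMap^[i] x) : ℤ)
        = ∑ i ∈ Finset.range p, (nX (shiftMap^[i] x) : ℤ)) ∧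
      (0 ≤ (∑ i ∈ Finset.range p, (lX (shiftMap^[i] x) : ℤ)) -
          ∑ i ∈ Finset.range p, (kX (shiftMap^[i] x) : ℤ)) ∧
      (∀ q : ℕ, IsLeastPeriod (h x) q →
        (∑ i ∈ Finset.range p, (lX (shiftMap^[i] x) : ℤ)) -
          ∑ i ∈ Finset.range p, (kX (shiftMap^[i] x) : ℤ) = (q : ℤ)) := by
  intro x hx p hper hlp
  obtain ⟨q, hq, hqx⟩ := hper
  obtain ⟨⟨hp, m, hm⟩, -⟩ := id hlp
  have hxmem : ∀ i : ℕ, shiftMap^[i] x ∈ X := by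
    intro i
    induction i with
    | zero => exact hx
    | succ n ih => rw [Function.iterate_succ_apply']; exact hX.2 _ ih
  have hmul : ∀ k : ℕ, shiftMap^[q * k] x = x := by
    intro k
    induction k with
    | zero => simp
    | succ n ih => rw [Nat.mul_succ, Function.iterate_add_apply, hqx, ih]
  have hpx : shiftMap^[p] x = x := by
    have h1 : shiftMap^[p] x = shiftMap^[p + q * (m + 1)] x := by
      rw [Function.iterate_add_apply, hmul]
    have hmle : m ≤ q * (m + 1) := by nlinarith [Nat.one_le_iff_ne_zero.mpr hq.ne']
    have h2 : p + q * (m + 1) = (q * (m + 1) - m) + (m + p) := by omega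
    rw [h1, h2, Function.iterate_add_apply, hm, ← Function.iterate_add_apply]
    have h3 : q * (m + 1) - m + m = q * (m + 1) := by omega
    rw [h3, hmul]
  have key : (∑ i ∈ Finset.range p, (lX (shiftMap^[i] x) : ℤ)) -
      ∑ i ∈ Finset.range p, (kX (shiftMap^[i] x) : ℤ)
      = ∑ i ∈ Finset.range p, (nX (shiftMap^[i] x) : ℤ) := by
    rw [← Finset.sum_sub_distrib]
    have heach : ∀ i ∈ Finset.range p, (lX (shiftMap^[i] x) : ℤ) - kX (shiftMap^[i] x)
        = (nX (shiftMap^[i] x) : ℤ) + (bX (shiftMap^[i] x) - bX (shiftMap^[i + 1] x)) := by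
      intro i _
      rw [hposX _ (hxmem i), Function.iterate_succ_apply']
      ring
    rw [Finset.sum_congr rfl heach, Finset.sum_add_distrib,
      Finset.sum_range_sub' (fun i => bX (shiftMap^[i] x)) p]
    simp [hpx]
  have hnn : 0 ≤ (∑ i ∈ Finset.range p, (lX (shiftMap^[i] x) : ℤ)) -
      ∑ i ∈ Finset.range p, (kX (shiftMap^[i] x) : ℤ) := by
    rw [key]
    exact Finset.sum_nonneg fun i _ => Int.natCast_nonneg _
  refine ⟨key, hnn, fun q' hq' => ?_⟩
  have habs := hspX x hx p ⟨q, hq, hqx⟩ hlp q' hq'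
  rw [← habs, abs_of_nonneg hnn]
end

section
/- Let X be a one-sided shift space and define the stabilization (X × ℕ, S_X) by S_X(x, n) = (x, n−1) for n > 0 and S_X(x, 0) = (σ_X(x), 0). Let H^{X×ℕ} = C(X×ℕ, ℤ)/{f − f∘S_X} and H^X = C(X, ℤ)/{f − f∘σ_X} be the ordered cohomology groups with positive cones given by classes of nonnegative functions. Then the map ι₀^*: C(X×ℕ, ℤ) → C(X, ℤ), ι₀^*(ξ)(x) = ξ(x, 0), induces a group isomorphism H(ι₀): H^{X×ℕ} → H^X which maps the positive cone H^{X×ℕ}_+ onto H^X_+ and sends [1_{X×ℕ}] to [1_X]. -/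
open Function Set

/-- The subgroup of coboundaries `{f − f∘T}` in `C(Z, ℤ)`. -/
def cobSub {Z : Type*} [TopologicalSpace Z] (T : C(Z, Z)) : AddSubgroup C(Z, ℤ) where
  carrier := {g : C(Z, ℤ) | ∃ f : C(Z, ℤ), g = f - f.comp T}
  zero_mem' := ⟨0, by ext z; simp⟩
  add_mem' := by
    rintro a b ⟨f, rfl⟩ ⟨g, rfl⟩
    exact ⟨f + g, by ext z; simp; ring⟩
  neg_mem' := by
    rintro a ⟨f, rfl⟩
    exact ⟨-f, by ext z; simp; ring⟩

/-- The ordered cohomology group `H^Z = C(Z, ℤ)/{f − f∘T}`. -/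
abbrev CohoGroup {Z : Type*} [TopologicalSpace Z] (T : C(Z, Z)) :=
  C(Z, ℤ) ⧸ cobSub T

/-- The positive cone: classes of nonnegative continuous functions. -/
def posCone {Z : Type*} [TopologicalSpace Z] (T : C(Z, Z)) : Set (CohoGroup T) :=
  {c : CohoGroup T | ∃ f : C(Z, ℤ), (∀ z : Z, 0 ≤ f z) ∧
    (QuotientAddGroup.mk f : CohoGroup T) = c}

/-- The continuous inclusion `z ↦ (z, 0)` of `Z` into its stabilization `Z × ℕ`. -/
def incl0 {Z : Type*} [TopologicalSpace Z] : C(Z, Z × ℕ) :=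
  ⟨fun z => (z, 0), Continuous.prodMk continuous_id continuous_const⟩

/-- A function on `Z × ℕ` (with `ℕ` discrete) is continuous if each slice is. -/
lemma continuous_of_discrete_snd {Z Y : Type*} [TopologicalSpace Z] [TopologicalSpace Y]
    {f : Z × ℕ → Y} (h : ∀ n, Continuous fun z => f (z, n)) : Continuous f := by
  rw [continuous_iff_continuousAt]
  rintro ⟨z, n⟩
  unfold ContinuousAt
  rw [nhds_prod_eq, nhds_discrete ℕ, Filter.prod_pure, Filter.tendsto_map'_iff]
  exact ((h n).tendsto z)

/-- The map `ι₀^*(ξ)(x) = ξ(x, 0)` induces a group isomorphism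
`H(ι₀): H^{X×ℕ} → H^X` between the ordered cohomology of the stabilization
`(X × ℕ, S_X)` and that of `(X, σ_X)`, mapping the positive cone onto the
positive cone and `[1_{X×ℕ}]` to `[1_X]`. -/
theorem stabilized_cohomology_iso {A : Type*} [Fintype A] [TopologicalSpace A]
    [DiscreteTopology A]
    (X : Set (ℕ → A)) (hXc : IsClosed X) (hXi : ∀ x ∈ X, shiftMap x ∈ X)
    (σ' : C(X, X)) (hσ' : ∀ x : X, ((σ' x : ℕ → A)) = shiftMap (x : ℕ → A))
    (S : C(X × ℕ, X × ℕ))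
    (hS0 : ∀ x : X, S (x, 0) = (σ' x, 0))
    (hSs : ∀ (x : X) (n : ℕ), S (x, n + 1) = (x, n)) :
    ∃ Φ : CohoGroup S ≃+ CohoGroup σ',
      (∀ ξ : C(X × ℕ, ℤ),
        Φ (QuotientAddGroup.mk ξ) = QuotientAddGroup.mk (ξ.comp incl0)) ∧
      Φ '' posCone S = posCone σ' ∧
      Φ (QuotientAddGroup.mk (1 : C(X × ℕ, ℤ))) =
        QuotientAddGroup.mk (1 : C(X, ℤ)) := by
  classical
  -- the projection X × ℕ → X
  let π : C(X × ℕ, X) := ⟨Prod.fst, continuous_fst⟩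
  -- Key fact A: ξ and (ξ∘ι₀)∘π differ by a coboundary of S.
  have keyA : ∀ ξ : C(X × ℕ, ℤ), ξ - ((ξ.comp incl0).comp π) ∈ cobSub S := by
    intro ξ
    have hcont : Continuous fun p : X × ℕ =>
        ∑ k ∈ Finset.range p.2, (ξ (p.1, k + 1) - ξ (p.1, 0)) := by
      apply continuous_of_discrete_snd
      intro n
      dsimp only
      apply continuous_finset_sum
      intro k _
      exact (ξ.continuous.comp (by continuity)).sub (ξ.continuous.comp (by continuity))
    refine ⟨⟨fun p => ∑ k ∈ Finset.range p.2, (ξ (p.1, k + 1) - ξ (p.1, 0)), hcont⟩, ?_⟩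
    ext ⟨x, n⟩
    cases n with
    | zero =>
        simp [incl0, π, hS0 x]
    | succ n =>
        simp [π, incl0, hSs x n, Finset.sum_range_succ]
        ring
  -- Key fact B: (f - f∘σ')∘π is a coboundary of S.
  have keyB : ∀ f : C(X, ℤ), (f - f.comp σ').comp π ∈ cobSub S := by
    intro f
    have hcont : Continuous fun p : X × ℕ =>
        f p.1 + (p.2 : ℤ) * (f p.1 - f (σ' p.1)) := by
      apply continuous_of_discrete_snd
      intro n
      dsimp only
      exact f.continuous.add (continuous_const.mul
        (f.continuous.sub (f.continuous.comp σ'.continuous)))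
    refine ⟨⟨fun p => f p.1 + (p.2 : ℤ) * (f p.1 - f (σ' p.1)), hcont⟩, ?_⟩
    ext ⟨x, n⟩
    cases n with
    | zero =>
        simp [π, hS0 x]
    | succ n =>
        simp [π, hSs x n]
        push_cast
        ring
  -- the homomorphism ξ ↦ ξ∘ι₀ on functions
  let φ : C(X × ℕ, ℤ) →+ C(X, ℤ) :=
    { toFun := fun ξ => ξ.comp incl0
      map_zero' := by ext x; simp
      map_add' := fun a b => by ext x; simp }
  let toQuot : C(X × ℕ, ℤ) →+ CohoGroup σ' :=
    (QuotientAddGroup.mk' (cobSub σ')).comp φ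
  have hker : cobSub S ≤ toQuot.ker := by
    rintro g ⟨f, rfl⟩
    have hcomp : (f - f.comp S).comp incl0
        = (f.comp incl0) - (f.comp incl0).comp σ' := by
      ext x
      simp [incl0, hS0 x]
    simp only [AddMonoidHom.mem_ker, toQuot, φ, AddMonoidHom.coe_comp,
      AddMonoidHom.coe_mk, ZeroHom.coe_mk, Function.comp_apply,
      QuotientAddGroup.mk'_apply, QuotientAddGroup.eq_zero_iff]
    rw [hcomp]
    exact ⟨f.comp incl0, rfl⟩
  let Φ₀ : CohoGroup S →+ CohoGroup σ' :=
    QuotientAddGroup.lift (cobSub S) toQuot hker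
  have hΦ₀ : ∀ ξ : C(X × ℕ, ℤ),
      Φ₀ (QuotientAddGroup.mk ξ) = QuotientAddGroup.mk (ξ.comp incl0) := fun ξ => rfl
  have hπι : ∀ f : C(X, ℤ), (f.comp π).comp incl0 = f := by
    intro f; ext x; simp [π, incl0]
  have hsurj : Function.Surjective Φ₀ := by
    intro c
    refine QuotientAddGroup.induction_on c ?_
    intro f
    exact ⟨QuotientAddGroup.mk (f.comp π), by rw [hΦ₀, hπι]⟩
  have hinj : Function.Injective Φ₀ := by
    rw [injective_iff_map_eq_zero]
    intro a
    refine QuotientAddGroup.induction_on a ?_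
    intro ξ hξ
    rw [hΦ₀] at hξ
    rw [QuotientAddGroup.eq_zero_iff] at hξ ⊢
    obtain ⟨f, hf⟩ := hξ
    have : ξ = (ξ - ((ξ.comp incl0).comp π)) + (f - f.comp σ').comp π := by
      rw [← hf]; abel
    rw [this]
    exact (cobSub S).add_mem (keyA ξ) (keyB f)
  let Φ : CohoGroup S ≃+ CohoGroup σ' := AddEquiv.ofBijective Φ₀ ⟨hinj, hsurj⟩
  have hΦ : ∀ ξ : C(X × ℕ, ℤ),
      Φ (QuotientAddGroup.mk ξ) = QuotientAddGroup.mk (ξ.comp incl0) := hΦ₀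
  refine ⟨Φ, hΦ, ?_, ?_⟩
  · ext c
    constructor
    · rintro ⟨-, ⟨ξ, hξ, rfl⟩, rfl⟩
      exact ⟨ξ.comp incl0, fun x => hξ (incl0 x), (hΦ ξ).symm⟩
    · rintro ⟨f, hf, rfl⟩
      refine ⟨QuotientAddGroup.mk (f.comp π), ⟨f.comp π, fun p => hf p.1, rfl⟩, ?_⟩
      rw [hΦ, hπι]
  · rw [hΦ]
    rfl
end

section
/- Let φ: X → Y be a surjective sliding block code between one-sided shift spaces which is almost injective with lag ℓ (φ(x) = φ(x') implies σ_X^ℓ(x) = σ_X^ℓ(x')). Then the map H(φ): H^Y → H^X given by H(φ)([g]) = [g ∘ φ] is a well-defined isomorphism of the ordered cohomology groups, mapping H^Y_+ onto H^X_+ and [1_Y] to [1_X]. -/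
open Function Set

/-- Iterate of a continuous self-map, as a continuous map. -/
def itc {Z : Type*} [TopologicalSpace Z] (T : C(Z, Z)) (n : ℕ) : C(Z, Z) :=
  ⟨(⇑T)^[n], T.continuous.iterate n⟩

lemma comp_itc_sub_mem {Z : Type*} [TopologicalSpace Z] (T : C(Z, Z)) (g : C(Z, ℤ)) (n : ℕ) :
    g.comp (itc T n) - g ∈ cobSub T := by
  induction n with
  | zero =>
    have h : g.comp (itc T 0) - g = 0 := by ext z; simp [itc]
    rw [h]; exact (cobSub T).zero_mem
  | succ n ih =>
    have key : g.comp (itc T (n + 1)) - g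
        = -((g.comp (itc T n)) - (g.comp (itc T n)).comp T) + (g.comp (itc T n) - g) := by
      ext z
      simp [itc, Function.iterate_succ_apply]
    rw [key]
    exact (cobSub T).add_mem ((cobSub T).neg_mem ⟨g.comp (itc T n), rfl⟩) ih

/-- If `φ : X → Y` is a surjective sliding block code between one-sided shift
spaces which is almost injective with lag `ℓ`, then `H(φ)([g]) = [g∘φ]` is a
well-defined isomorphism `H^Y → H^X` of ordered cohomology groups, mapping
`H^Y_+` onto `H^X_+` and `[1_Y]` to `[1_X]`. -/
theorem cohomology_iso_of_almost_injective_sbc {A B : Type*}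
    [Fintype A] [TopologicalSpace A] [DiscreteTopology A]
    [Fintype B] [TopologicalSpace B] [DiscreteTopology B]
    (X : Set (ℕ → A)) (Y : Set (ℕ → B))
    (hXc : IsClosed X) (hXi : ∀ x ∈ X, shiftMap x ∈ X)
    (hYc : IsClosed Y) (hYi : ∀ y ∈ Y, shiftMap y ∈ Y)
    (σX : C(X, X)) (hσX : ∀ x : X, ((σX x : ℕ → A)) = shiftMap (x : ℕ → A))
    (σY : C(Y, Y)) (hσY : ∀ y : Y, ((σY y : ℕ → B)) = shiftMap (y : ℕ → B))
    (φ : C(X, Y)) (hsurj : Function.Surjective φ)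
    (hequi : ∀ x : X, φ (σX x) = σY (φ x))
    (ℓ : ℕ)
    (hai : ∀ x x' : X, φ x = φ x' → (⇑σX)^[ℓ] x = (⇑σX)^[ℓ] x') :
    ∃ Φ : CohoGroup σY ≃+ CohoGroup σX,
      (∀ g : C(Y, ℤ), Φ (QuotientAddGroup.mk g) = QuotientAddGroup.mk (g.comp φ)) ∧
      Φ '' posCone σY = posCone σX ∧
      Φ (QuotientAddGroup.mk (1 : C(Y, ℤ))) =
        QuotientAddGroup.mk (1 : C(X, ℤ)) := by
  classical
  haveI : CompactSpace X := isCompact_iff_compactSpace.mp hXc.isCompact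
  have hqm : Topology.IsQuotientMap ⇑φ :=
    φ.continuous.isClosedMap.isQuotientMap φ.continuous hsurj
  -- the continuous section-like map q : Y → X, q y = σX^ℓ (any preimage of y)
  set q0 : Y → X := fun y => (⇑σX)^[ℓ] (hsurj y).choose with hq0def
  have hq0 : ∀ x : X, q0 (φ x) = (⇑σX)^[ℓ] x := fun x =>
    hai _ _ (hsurj (φ x)).choose_spec
  have hcont : Continuous q0 := by
    rw [hqm.continuous_iff]
    have h : q0 ∘ ⇑φ = (⇑σX)^[ℓ] := funext hq0
    rw [h]; exact σX.continuous.iterate ℓ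
  set qc : C(Y, X) := ⟨q0, hcont⟩ with hqcdef
  have hqσ : ∀ y : Y, qc (σY y) = σX (qc y) := by
    intro y
    have h1 : σY y = φ (σX (hsurj y).choose) := by
      rw [hequi, (hsurj y).choose_spec]
    show q0 (σY y) = σX (q0 y)
    rw [h1, hq0]
    show (⇑σX)^[ℓ] (σX ((hsurj y).choose)) = σX ((⇑σX)^[ℓ] ((hsurj y).choose))
    rw [← Function.iterate_succ_apply, Function.iterate_succ_apply']
  have hφq : ∀ y : Y, φ (qc y) = (⇑σY)^[ℓ] y := by
    intro y
    have hsemi : Function.Semiconj ⇑φ ⇑σX ⇑σY := hequi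
    show φ ((⇑σX)^[ℓ] ((hsurj y).choose)) = (⇑σY)^[ℓ] y
    rw [hsemi.iterate_right ℓ (hsurj y).choose, (hsurj y).choose_spec]
  -- group homomorphisms on functions
  let Fc : C(Y, ℤ) →+ C(X, ℤ) :=
    { toFun := fun g => g.comp φ
      map_zero' := by ext x; simp
      map_add' := fun a b => by ext x; simp }
  let Gc : C(X, ℤ) →+ C(Y, ℤ) :=
    { toFun := fun f => f.comp qc
      map_zero' := by ext y; simp
      map_add' := fun a b => by ext y; simp }
  have hF : cobSub σY ≤ (cobSub σX).comap Fc := by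
    rintro a ⟨f, rfl⟩
    refine ⟨f.comp φ, ?_⟩
    ext x
    simp [Fc, hequi x]
  have hG : cobSub σX ≤ (cobSub σY).comap Gc := by
    rintro a ⟨f, rfl⟩
    refine ⟨f.comp qc, ?_⟩
    ext y
    simp [Gc, hqσ y]
  let Φ : CohoGroup σY →+ CohoGroup σX := QuotientAddGroup.map _ _ Fc hF
  let Ψ : CohoGroup σX →+ CohoGroup σY := QuotientAddGroup.map _ _ Gc hG
  have hΦmk : ∀ g : C(Y, ℤ), Φ (QuotientAddGroup.mk g) = QuotientAddGroup.mk (g.comp φ) :=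
    fun g => rfl
  have hΨmk : ∀ f : C(X, ℤ), Ψ (QuotientAddGroup.mk f) = QuotientAddGroup.mk (f.comp qc) :=
    fun f => rfl
  have hleft : ∀ c : CohoGroup σY, Ψ (Φ c) = c := by
    intro c
    induction c using QuotientAddGroup.induction_on with
    | H g =>
      rw [hΦmk, hΨmk]
      have h1 : (g.comp φ).comp qc = g.comp (itc σY ℓ) := by
        ext y
        simp [itc, hφq y]
      rw [h1]
      exact QuotientAddGroup.eq.mpr (by
        simpa [neg_add_eq_sub] using (cobSub σY).neg_mem (comp_itc_sub_mem σY g ℓ))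
  have hright : ∀ c : CohoGroup σX, Φ (Ψ c) = c := by
    intro c
    induction c using QuotientAddGroup.induction_on with
    | H f =>
      rw [hΨmk, hΦmk]
      have h1 : (f.comp qc).comp φ = f.comp (itc σX ℓ) := by
        ext x
        show f (qc (φ x)) = f ((⇑σX)^[ℓ] x)
        exact congrArg f (hq0 x)
      rw [h1]
      exact QuotientAddGroup.eq.mpr (by
        simpa [neg_add_eq_sub] using (cobSub σX).neg_mem (comp_itc_sub_mem σX f ℓ))
  let Φe : CohoGroup σY ≃+ CohoGroup σX :=
    { toFun := Φ
      invFun := Ψ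
      left_inv := hleft
      right_inv := hright
      map_add' := Φ.map_add }
  have hΦe : ∀ c : CohoGroup σY, Φe c = Φ c := fun _ => rfl
  refine ⟨Φe, fun g => (hΦe _).trans (hΦmk g), ?_, ?_⟩
  · ext c
    constructor
    · rintro ⟨d, ⟨g, hg, rfl⟩, rfl⟩
      exact ⟨g.comp φ, fun x => hg (φ x), ((hΦe _).trans (hΦmk g)).symm⟩
    · rintro ⟨f, hf, rfl⟩
      refine ⟨QuotientAddGroup.mk (f.comp qc), ⟨f.comp qc, fun y => hf (qc y), rfl⟩, ?_⟩
      rw [hΦe, ← hΨmk f]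
      exact hright _
  · rw [hΦe, hΦmk]
    congr 1
end

section
/- Let X be a one-sided shift space, f: X → ℕ₊ continuous, and (X_f, σ_f) as above. The map ι_f^*: C(X_f, ℤ) → C(X, ℤ) given by ι_f^*(ξ)(x) = Σ_{r=0}^{f(σ_X(x))−1} ξ(σ_f^r(x, 0)) induces a well-defined isomorphism H(ι_f): H^{X_f} → H^X of ordered cohomology groups, i.e., H(ι_f)([ξ]) = [ι_f^*(ξ)] is a group isomorphism mapping H^{X_f}_+ onto H^X_+. -/
open Function Set

lemma continuous_sum_range {Y : Type*} [TopologicalSpace Y]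
    (u : Y → ℕ) (hu : Continuous u) (g : ℕ → Y → ℤ) (hg : ∀ j, Continuous (g j)) :
    Continuous fun y => ∑ j ∈ Finset.range (u y), g j y := by
  rw [continuous_iff_continuousAt]
  intro y0
  have h1 : ContinuousAt (fun y => ∑ j ∈ Finset.range (u y0), g j y) y0 :=
    (continuous_finset_sum _ fun j _ => hg j).continuousAt
  apply h1.congr
  have hmem : u ⁻¹' {u y0} ∈ nhds y0 :=
    ((isOpen_discrete ({u y0} : Set ℕ)).preimage hu).mem_nhds rfl
  filter_upwards [hmem] with y hy
  rw [show u y = u y0 from hy]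

section SuspAux

variable {A : Type*} [TopologicalSpace A]
variable {X : Set (ℕ → A)} {f : C(X, ℕ)} {Xf : Set (X × ℕ)}

/-- junk-extension of `ξ : C(Xf, ℤ)` to all of `X × ℕ`. -/
def eext (hf : ∀ x : X, 0 < f x) (hXf : ∀ p : X × ℕ, p ∈ Xf ↔ p.2 < f p.1)
    (ξ : C(Xf, ℤ)) : X × ℕ → ℤ :=
  fun p => ξ ⟨(p.1, min p.2 (f p.1 - 1)),
    (hXf _).2 (lt_of_le_of_lt (min_le_right _ _) (Nat.sub_lt (hf p.1) one_pos))⟩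

lemma eext_cont (hf : ∀ x : X, 0 < f x) (hXf : ∀ p : X × ℕ, p ∈ Xf ↔ p.2 < f p.1)
    (ξ : C(Xf, ℤ)) : Continuous (eext hf hXf ξ) := by
  apply ξ.continuous.comp
  apply Continuous.subtype_mk
  refine continuous_fst.prodMk ?_
  have h1 : Continuous fun p : X × ℕ => (p.2, f p.1 - 1) :=
    continuous_snd.prodMk
      ((continuous_of_discreteTopology (f := fun n : ℕ => n - 1)).comp
        (f.continuous.comp continuous_fst))
  exact (continuous_of_discreteTopology (f := fun q : ℕ × ℕ => min q.1 q.2)).comp h1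

lemma eext_apply (hf : ∀ x : X, 0 < f x) (hXf : ∀ p : X × ℕ, p ∈ Xf ↔ p.2 < f p.1)
    (ξ : C(Xf, ℤ)) (q : Xf) : eext hf hXf ξ (q : X × ℕ) = ξ q := by
  have h2 : (q : X × ℕ).2 < f (q : X × ℕ).1 := (hXf _).1 q.2
  unfold eext
  congr 1
  apply Subtype.ext
  exact Prod.ext rfl (Nat.min_eq_left (by omega))

lemma eext_lt (hf : ∀ x : X, 0 < f x) (hXf : ∀ p : X × ℕ, p ∈ Xf ↔ p.2 < f p.1)
    (ξ : C(Xf, ℤ)) (x : X) (i : ℕ) (h : i < f x) :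
    eext hf hXf ξ (x, i) = ξ ⟨(x, i), (hXf _).2 h⟩ :=
  eext_apply hf hXf ξ ⟨(x, i), (hXf _).2 h⟩

/-- fiber-sum map `C(Xf, ℤ) →+ C(X, ℤ)`. -/
def Smap (hf : ∀ x : X, 0 < f x) (hXf : ∀ p : X × ℕ, p ∈ Xf ↔ p.2 < f p.1) :
    C(Xf, ℤ) →+ C(X, ℤ) where
  toFun ξ := ⟨fun x => ∑ i ∈ Finset.range (f x), eext hf hXf ξ (x, i),
    continuous_sum_range _ f.continuous _
      (fun j => (eext_cont hf hXf ξ).comp (continuous_id.prodMk continuous_const))⟩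
  map_zero' := by ext x; simp [eext]
  map_add' ξ η := by
    ext x
    simp [eext, Finset.sum_add_distrib]

lemma Smap_apply (hf : ∀ x : X, 0 < f x) (hXf : ∀ p : X × ℕ, p ∈ Xf ↔ p.2 < f p.1)
    (ξ : C(Xf, ℤ)) (x : X) :
    Smap hf hXf ξ x = ∑ i ∈ Finset.range (f x), eext hf hXf ξ (x, i) := rfl

/-- the injection `C(X, ℤ) →+ C(Xf, ℤ)` supported on the zero section. -/
def Jmap (hXf : ∀ p : X × ℕ, p ∈ Xf ↔ p.2 < f p.1) : C(X, ℤ) →+ C(Xf, ℤ) where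
  toFun g := ⟨fun q => ∑ _j ∈ Finset.range (1 - (q : X × ℕ).2), g (q : X × ℕ).1,
    continuous_sum_range (fun q : Xf => 1 - (q : X × ℕ).2)
      ((continuous_of_discreteTopology (f := fun n : ℕ => 1 - n)).comp
        (continuous_snd.comp continuous_subtype_val))
      _ (fun _j => g.continuous.comp (continuous_fst.comp continuous_subtype_val))⟩
  map_zero' := by ext q; simp
  map_add' g h := by ext q; simp [Finset.sum_add_distrib, mul_add]

lemma Jmap_apply (hXf : ∀ p : X × ℕ, p ∈ Xf ↔ p.2 < f p.1) (g : C(X, ℤ)) (q : Xf) :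
    Jmap hXf g q = if (q : X × ℕ).2 = 0 then g (q : X × ℕ).1 else 0 := by
  show (∑ _j ∈ Finset.range (1 - (q : X × ℕ).2), g (q : X × ℕ).1) = _
  cases h : (q : X × ℕ).2 with
  | zero => simp [h]
  | succ n => simp [h]

variable {σ' : C(X, X)} {σfc : C(Xf, Xf)}

lemma S_J (hf : ∀ x : X, 0 < f x) (hXf : ∀ p : X × ℕ, p ∈ Xf ↔ p.2 < f p.1)
    (g : C(X, ℤ)) : Smap hf hXf (Jmap hXf g) = g := by
  ext x
  rw [Smap_apply]
  have : ∀ i ∈ Finset.range (f x), eext hf hXf (Jmap hXf g) (x, i)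
      = if i = 0 then g x else 0 := by
    intro i hi
    rw [Finset.mem_range] at hi
    rw [eext_lt hf hXf _ x i hi, Jmap_apply]
  rw [Finset.sum_congr rfl this, Finset.sum_ite_eq' (Finset.range (f x)) 0 (fun _ => g x),
    if_pos (Finset.mem_range.mpr (hf x))]

/-- `S` maps coboundaries to coboundaries. -/
lemma S_cob (hf : ∀ x : X, 0 < f x) (hXf : ∀ p : X × ℕ, p ∈ Xf ↔ p.2 < f p.1)
    (hσf0 : ∀ p : Xf, (p : X × ℕ).2 = 0 →
      ((σfc p : X × ℕ)) = (σ' (p : X × ℕ).1, f (σ' (p : X × ℕ).1) - 1))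
    (hσfs : ∀ (p : Xf) (n : ℕ), (p : X × ℕ).2 = n + 1 →
      ((σfc p : X × ℕ)) = ((p : X × ℕ).1, n))
    (η : C(Xf, ℤ)) :
    ∃ d : C(X, ℤ), Smap hf hXf (η - η.comp σfc) = d - d.comp σ' := by
  refine ⟨⟨fun x => eext hf hXf η (x, f x - 1),
    (eext_cont hf hXf η).comp (continuous_id.prodMk
      ((continuous_of_discreteTopology (f := fun n : ℕ => n - 1)).comp f.continuous))⟩, ?_⟩
  ext x
  rw [map_sub]
  have hfx : f x = (f x - 1) + 1 := (Nat.succ_pred_eq_of_pos (hf x)).symm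
  -- compute S η x
  have e1 : Smap hf hXf η x
      = (∑ i ∈ Finset.range (f x - 1), eext hf hXf η (x, i)) + eext hf hXf η (x, f x - 1) := by
    rw [Smap_apply]
    conv_lhs => rw [hfx]
    rw [Finset.sum_range_succ]
  -- compute S (η ∘ σfc) x
  have e2 : Smap hf hXf (η.comp σfc) x
      = (∑ i ∈ Finset.range (f x - 1), eext hf hXf η (x, i))
        + eext hf hXf η (σ' x, f (σ' x) - 1) := by
    rw [Smap_apply]
    conv_lhs => rw [hfx]
    rw [Finset.sum_range_succ']
    congr 1
    · apply Finset.sum_congr rfl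
      intro i hi
      rw [Finset.mem_range] at hi
      have hilt : i + 1 < f x := by omega
      rw [eext_lt hf hXf _ x (i + 1) hilt]
      show η (σfc _) = _
      have hv := hσfs ⟨(x, i + 1), (hXf _).2 hilt⟩ i rfl
      rw [← eext_apply hf hXf η (σfc ⟨(x, i + 1), (hXf _).2 hilt⟩), hv]
    · have h0 : (0 : ℕ) < f x := hf x
      rw [eext_lt hf hXf _ x 0 h0]
      show η (σfc _) = _
      have hv := hσf0 ⟨(x, 0), (hXf _).2 h0⟩ rfl
      rw [← eext_apply hf hXf η (σfc ⟨(x, 0), (hXf _).2 h0⟩), hv]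
  simp only [ContinuousMap.sub_apply, ContinuousMap.comp_apply, ContinuousMap.coe_mk]
  rw [e1, e2]
  ring

/-- if `S ξ` is a coboundary for `σ'` (witnessed by `h`), then `ξ` is a
coboundary for `σfc`. -/
lemma cob_of_S (hf : ∀ x : X, 0 < f x) (hXf : ∀ p : X × ℕ, p ∈ Xf ↔ p.2 < f p.1)
    (hσf0 : ∀ p : Xf, (p : X × ℕ).2 = 0 →
      ((σfc p : X × ℕ)) = (σ' (p : X × ℕ).1, f (σ' (p : X × ℕ).1) - 1))
    (hσfs : ∀ (p : Xf) (n : ℕ), (p : X × ℕ).2 = n + 1 →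
      ((σfc p : X × ℕ)) = ((p : X × ℕ).1, n))
    (ξ : C(Xf, ℤ)) (h : C(X, ℤ)) (hS : ∀ x : X, Smap hf hXf ξ x = h x - h (σ' x)) :
    ξ ∈ cobSub σfc := by
  classical
  refine ⟨⟨fun q => h (σ' (q : X × ℕ).1)
      + ∑ j ∈ Finset.range ((q : X × ℕ).2 + 1), eext hf hXf ξ ((q : X × ℕ).1, j), ?_⟩, ?_⟩
  · apply Continuous.add
    · exact h.continuous.comp (σ'.continuous.comp (continuous_fst.comp continuous_subtype_val))
    · exact continuous_sum_range (fun q : Xf => (q : X × ℕ).2 + 1)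
        ((continuous_of_discreteTopology (f := fun n : ℕ => n + 1)).comp
          (continuous_snd.comp continuous_subtype_val))
        _ (fun j => (eext_cont hf hXf ξ).comp
          ((continuous_fst.comp continuous_subtype_val).prodMk continuous_const))
  · ext q
    simp only [ContinuousMap.sub_apply, ContinuousMap.comp_apply, ContinuousMap.coe_mk]
    set x := (q : X × ℕ).1 with hx
    cases hq2 : (q : X × ℕ).2 with
    | zero =>
      have hv := hσf0 q hq2
      have hσq1 : ((σfc q : X × ℕ)).1 = σ' x := by rw [hv]
      have hσq2 : ((σfc q : X × ℕ)).2 = f (σ' x) - 1 := by rw [hv]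
      rw [hσq1, hσq2]
      have hfσ : (f (σ' x) - 1) + 1 = f (σ' x) := Nat.succ_pred_eq_of_pos (hf _)
      rw [hfσ]
      have hSs : (∑ j ∈ Finset.range (f (σ' x)), eext hf hXf ξ (σ' x, j))
          = h (σ' x) - h (σ' (σ' x)) := by rw [← Smap_apply hf hXf, hS]
      rw [hSs]
      have hq0 : ξ q = eext hf hXf ξ (x, 0) := by
        rw [← eext_apply hf hXf ξ q]
        congr 1
        exact Prod.ext rfl hq2
      rw [hq0]
      simp
    | succ n =>
      have hv := hσfs q n hq2
      have hσq1 : ((σfc q : X × ℕ)).1 = x := by rw [hv]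
      have hσq2 : ((σfc q : X × ℕ)).2 = n := by rw [hv]
      rw [hσq1, hσq2, Finset.sum_range_succ]
      have hqn : ξ q = eext hf hXf ξ (x, n + 1) := by
        rw [← eext_apply hf hXf ξ q]
        congr 1
        exact Prod.ext rfl hq2
      rw [hqn]
      ring

/-- formula for the iterates of `σf` starting at the zero section. -/
lemma iter_val (hf : ∀ x : X, 0 < f x)
    (hσf0 : ∀ p : Xf, (p : X × ℕ).2 = 0 →
      ((σfc p : X × ℕ)) = (σ' (p : X × ℕ).1, f (σ' (p : X × ℕ).1) - 1))
    (hσfs : ∀ (p : Xf) (n : ℕ), (p : X × ℕ).2 = n + 1 →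
      ((σfc p : X × ℕ)) = ((p : X × ℕ).1, n))
    (ι : X → Xf) (hι : ∀ x : X, ((ι x : X × ℕ)) = (x, 0))
    (x : X) (r : ℕ) (h1 : 1 ≤ r) (h2 : r ≤ f (σ' x)) :
    ((⇑σfc)^[r] (ι x) : X × ℕ) = (σ' x, f (σ' x) - r) := by
  induction r with
  | zero => omega
  | succ r ih =>
    rcases Nat.eq_zero_or_pos r with hr | hr
    · subst hr
      rw [Function.iterate_one]
      have h0 : ((ι x : X × ℕ)).2 = 0 := by rw [hι]
      have := hσf0 (ι x) h0
      rw [this, hι]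
    · rw [Function.iterate_succ_apply']
      have hv := ih hr (by omega)
      have hpos : f (σ' x) - r = (f (σ' x) - (r + 1)) + 1 := by omega
      have := hσfs ((⇑σfc)^[r] (ι x)) (f (σ' x) - (r + 1)) (by rw [hv]; exact hpos)
      rw [this, hv]

/-- pointwise formula relating `g` (given by the `ι_f^*` sum) to `S ξ`. -/
lemma formula_eq (hf : ∀ x : X, 0 < f x) (hXf : ∀ p : X × ℕ, p ∈ Xf ↔ p.2 < f p.1)
    (hσf0 : ∀ p : Xf, (p : X × ℕ).2 = 0 →
      ((σfc p : X × ℕ)) = (σ' (p : X × ℕ).1, f (σ' (p : X × ℕ).1) - 1))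
    (hσfs : ∀ (p : Xf) (n : ℕ), (p : X × ℕ).2 = n + 1 →
      ((σfc p : X × ℕ)) = ((p : X × ℕ).1, n))
    (ι : X → Xf) (hι : ∀ x : X, ((ι x : X × ℕ)) = (x, 0))
    (ξ : C(Xf, ℤ)) (x : X) :
    (∑ r ∈ Finset.range (f (σ' x)), ξ ((⇑σfc)^[r] (ι x)))
      = eext hf hXf ξ (x, 0) + Smap hf hXf ξ (σ' x) - eext hf hXf ξ (σ' x, 0) := by
  set m := f (σ' x) with hm
  have hm1 : m = (m - 1) + 1 := (Nat.succ_pred_eq_of_pos (hf _)).symm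
  have step1 : (∑ r ∈ Finset.range m, ξ ((⇑σfc)^[r] (ι x)))
      = (∑ r ∈ Finset.range (m - 1), ξ ((⇑σfc)^[r + 1] (ι x))) + ξ (ι x) := by
    conv_lhs => rw [hm1]
    rw [Finset.sum_range_succ']
    simp
  have step2 : ∀ r ∈ Finset.range (m - 1),
      ξ ((⇑σfc)^[r + 1] (ι x)) = eext hf hXf ξ (σ' x, m - (r + 1)) := by
    intro r hr
    rw [Finset.mem_range] at hr
    have hv := iter_val (σ' := σ') (σfc := σfc) hf hσf0 hσfs ι hι x (r + 1)
      (by omega) (by omega)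
    rw [← eext_apply hf hXf ξ ((⇑σfc)^[r + 1] (ι x)), hv]
  have step3 : (∑ r ∈ Finset.range (m - 1), eext hf hXf ξ (σ' x, m - (r + 1)))
      = ∑ j ∈ Finset.range (m - 1), eext hf hXf ξ (σ' x, j + 1) := by
    rw [← Finset.sum_range_reflect (fun j => eext hf hXf ξ (σ' x, j + 1)) (m - 1)]
    apply Finset.sum_congr rfl
    intro j hj
    rw [Finset.mem_range] at hj
    congr 2
    omega
  have step4 : Smap hf hXf ξ (σ' x)
      = (∑ j ∈ Finset.range (m - 1), eext hf hXf ξ (σ' x, j + 1))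
        + eext hf hXf ξ (σ' x, 0) := by
    rw [Smap_apply]
    conv_lhs => rw [← hm, hm1]
    rw [Finset.sum_range_succ']
  have hι0 : ξ (ι x) = eext hf hXf ξ (x, 0) := by
    rw [← eext_apply hf hXf ξ (ι x), hι]
  rw [step1, Finset.sum_congr rfl step2, step3, step4, hι0]
  ring

end SuspAux

/-- Let `X` be a one-sided shift space, `f : X → ℕ₊` continuous, and `(X_f, σ_f)`
the suspension. The map `ι_f^*(ξ)(x) = Σ_{r < f(σ_X(x))} ξ(σ_f^r(x, 0))` induces a
well-defined isomorphism `H(ι_f): H^{X_f} → H^X` of ordered cohomology groups,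
mapping the positive cone onto the positive cone. -/
theorem suspension_cohomology_iso {A : Type*} [Fintype A] [TopologicalSpace A]
    [DiscreteTopology A]
    (X : Set (ℕ → A)) (hXc : IsClosed X) (hXi : ∀ x ∈ X, shiftMap x ∈ X)
    (σ' : C(X, X)) (hσ' : ∀ x : X, ((σ' x : ℕ → A)) = shiftMap (x : ℕ → A))
    (f : C(X, ℕ)) (hf : ∀ x : X, 0 < f x)
    (Xf : Set (X × ℕ)) (hXf : ∀ p : X × ℕ, p ∈ Xf ↔ p.2 < f p.1)
    (σfc : C(Xf, Xf))
    (hσf0 : ∀ p : Xf, (p : X × ℕ).2 = 0 →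
      ((σfc p : X × ℕ)) = (σ' (p : X × ℕ).1, f (σ' (p : X × ℕ).1) - 1))
    (hσfs : ∀ (p : Xf) (n : ℕ), (p : X × ℕ).2 = n + 1 →
      ((σfc p : X × ℕ)) = ((p : X × ℕ).1, n))
    (ι : X → Xf) (hι : ∀ x : X, ((ι x : X × ℕ)) = (x, 0)) :
    ∃ Φ : CohoGroup σfc ≃+ CohoGroup σ',
      (∀ (ξ : C(Xf, ℤ)) (g : C(X, ℤ)),
        (∀ x : X, g x = ∑ r ∈ Finset.range (f (σ' x)), ξ ((⇑σfc)^[r] (ι x))) →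
        Φ (QuotientAddGroup.mk ξ) = QuotientAddGroup.mk g) ∧
      Φ '' posCone σfc = posCone σ' := by
  classical
  set S : C(Xf, ℤ) →+ C(X, ℤ) := Smap hf hXf with hS
  set J : C(X, ℤ) →+ C(Xf, ℤ) := Jmap hXf with hJ
  let πX : C(X, ℤ) →+ CohoGroup σ' := QuotientAddGroup.mk' (cobSub σ')
  let πF : C(Xf, ℤ) →+ CohoGroup σfc := QuotientAddGroup.mk' (cobSub σfc)
  have hkerS : ∀ ξ ∈ cobSub σfc, (πX.comp S) ξ = 0 := by
    rintro ξ ⟨η, rfl⟩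
    obtain ⟨d, hd⟩ := S_cob (σ' := σ') hf hXf hσf0 hσfs η
    have : S (η - η.comp σfc) ∈ cobSub σ' := ⟨d, hd⟩
    change (QuotientAddGroup.mk (S (η - η.comp σfc)) : CohoGroup σ') = 0
    exact (QuotientAddGroup.eq_zero_iff _).mpr this
  have hkerJ : ∀ g ∈ cobSub σ', (πF.comp J) g = 0 := by
    rintro g ⟨h, rfl⟩
    have : J (h - h.comp σ') ∈ cobSub σfc := by
      apply cob_of_S hf hXf hσf0 hσfs _ h
      intro x
      rw [hJ, S_J hf hXf]
      simp
    change (QuotientAddGroup.mk (J (h - h.comp σ')) : CohoGroup σfc) = 0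
    exact (QuotientAddGroup.eq_zero_iff _).mpr this
  let Φ₀ : CohoGroup σfc →+ CohoGroup σ' :=
    QuotientAddGroup.lift (cobSub σfc) (πX.comp S) hkerS
  let Ψ₀ : CohoGroup σ' →+ CohoGroup σfc :=
    QuotientAddGroup.lift (cobSub σ') (πF.comp J) hkerJ
  have hΦ₀ : ∀ ξ : C(Xf, ℤ), Φ₀ (QuotientAddGroup.mk ξ) = QuotientAddGroup.mk (S ξ) := by
    intro ξ; rfl
  have hΨ₀ : ∀ g : C(X, ℤ), Ψ₀ (QuotientAddGroup.mk g) = QuotientAddGroup.mk (J g) := by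
    intro g; rfl
  have hleft : ∀ c : CohoGroup σfc, Ψ₀ (Φ₀ c) = c := by
    intro c
    induction c using QuotientAddGroup.induction_on with
    | H ξ =>
      rw [hΦ₀, hΨ₀]
      rw [QuotientAddGroup.eq]
      apply cob_of_S hf hXf hσf0 hσfs _ 0
      intro x
      rw [map_add, map_neg]
      have h1 : Smap hf hXf (Jmap hXf (Smap hf hXf ξ)) = Smap hf hXf ξ := S_J hf hXf _
      simp only [hS, hJ] at *
      rw [h1]
      simp
  have hright : ∀ c : CohoGroup σ', Φ₀ (Ψ₀ c) = c := by
    intro c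
    induction c using QuotientAddGroup.induction_on with
    | H g =>
      rw [hΨ₀, hΦ₀]
      rw [hS, hJ, S_J hf hXf]
  let Φ : CohoGroup σfc ≃+ CohoGroup σ' :=
    { toFun := Φ₀, invFun := Ψ₀, left_inv := hleft, right_inv := hright,
      map_add' := Φ₀.map_add }
  refine ⟨Φ, ?_, ?_⟩
  · intro ξ g hg
    show Φ₀ (QuotientAddGroup.mk ξ) = QuotientAddGroup.mk g
    rw [hΦ₀, QuotientAddGroup.eq]
    -- witness: (e - S ξ) - (e - S ξ) ∘ σ'  equals  -S ξ + g
    have hcont_e : Continuous fun x : X => eext hf hXf ξ (x, 0) :=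
      (eext_cont hf hXf ξ).comp (continuous_id.prodMk continuous_const)
    set e : C(X, ℤ) := ⟨fun x => eext hf hXf ξ (x, 0), hcont_e⟩ with he
    refine ⟨e - Smap hf hXf ξ, ?_⟩
    ext x
    have hgx := hg x
    rw [formula_eq hf hXf hσf0 hσfs ι hι ξ x] at hgx
    simp only [ContinuousMap.sub_apply, ContinuousMap.add_apply, ContinuousMap.neg_apply,
      ContinuousMap.comp_apply, ContinuousMap.coe_mk, hS, he, hgx]
    ring
  · ext c
    constructor
    · rintro ⟨c', ⟨ξ, hξpos, rfl⟩, rfl⟩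
      refine ⟨S ξ, ?_, ?_⟩
      · intro x
        rw [hS, Smap_apply]
        apply Finset.sum_nonneg
        intro i _
        exact hξpos _
      · show QuotientAddGroup.mk (S ξ) = Φ₀ (QuotientAddGroup.mk ξ)
        exact (hΦ₀ ξ).symm
    · rintro ⟨g, hgpos, rfl⟩
      refine ⟨Ψ₀ (QuotientAddGroup.mk g), ⟨J g, ?_, (hΨ₀ g).symm⟩, ?_⟩
      swap
      · show Φ₀ (Ψ₀ (QuotientAddGroup.mk g)) = QuotientAddGroup.mk g
        exact hright _
      intro q
      rw [hJ, Jmap_apply]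
      split
      · exact hgpos _
      · exact le_refl 0
end
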